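/- arXiv:1412.0715 — 4 statements merged into one kernel-verified Lean document; each statement's English description precedes it below -/
import Mathlib

section
/- Let Z be a Blaschke sequence in 𝔻 whose Blaschke product B = B_Z is uniformly nonzero. Then there exists a finite constant N such that for every ζ ∈ 𝔻 the number of points of Z, counted with multiplicity, lying in the pseudohyperbolic disk D(ζ,1/2) is at most N. -/
open Complex MeasureTheory Metric Filter Set List

noncomputable section

/-- The Möbius involution `φ_a(z) = (a - z)/(1 - ā z)` of the unit disk interchanging `0` and `a`. -/
def mobius (a z : ℂ) : ℂ := (a - z) / (1 - (starRingEnd ℂ) a * z)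

/-- The pseudohyperbolic metric `ψ(z,w) = |z - w| / |1 - w̄ z|`. -/
def pseudoDist (z w : ℂ) : ℝ := ‖(z - w) / (1 - (starRingEnd ℂ) w * z)‖

/-- A single Blaschke factor with zero at `a` (equal to `z` when `a = 0`). -/
def blaschkeFactor (a z : ℂ) : ℂ :=
  if a = 0 then z
  else ((starRingEnd ℂ) a / (‖a‖ : ℂ)) * ((a - z) / (1 - (starRingEnd ℂ) a * z))

/-- The Blaschke product associated with the sequence `Z`. -/
def blaschkeProduct (Z : ℕ → ℂ) (z : ℂ) : ℂ := ∏' k, blaschkeFactor (Z k) z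

/-- `Z` is a Blaschke sequence in the unit disk: `Σ (1 - |z_k|²) < ∞`. -/
def IsBlaschkeSeq (Z : ℕ → ℂ) : Prop :=
  (∀ k, ‖Z k‖ < 1) ∧ Summable (fun k => 1 - ‖Z k‖ ^ 2)

/-- A sequence is uniformly separated if `inf_k ∏_{j ≠ k} ψ(z_j, z_k) > 0`. -/
def UniformlySeparated {ι : Type*} (Z : ι → ℂ) : Prop :=
  ∃ δ : ℝ, 0 < δ ∧ ∀ k : ι, δ ≤ ∏' j : {j : ι // j ≠ k}, pseudoDist (Z j.1) (Z k)

/-- `Z` is a finite union of uniformly separated sequences. -/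
def FiniteUnionUnifSep (Z : ℕ → ℂ) : Prop :=
  ∃ (n : ℕ) (c : ℕ → Fin n), ∀ i : Fin n,
    UniformlySeparated (fun k : {k : ℕ // c k = i} => Z k.1)

/-- `φ` is a conformal automorphism of the unit disk. -/
def IsDiskAut (φ : ℂ → ℂ) : Prop :=
  ∃ c a : ℂ, ‖c‖ = 1 ∧ ‖a‖ < 1 ∧ ∀ z, φ z = c * mobius a z

/-- The sequence of functions `F n` tends to `0` uniformly on compact subsets of the unit disk. -/
def TendstoZeroOnCompacts (F : ℕ → ℂ → ℂ) : Prop :=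
  ∀ K : Set ℂ, K ⊆ Metric.ball (0 : ℂ) 1 → IsCompact K →
    TendstoUniformlyOn F (fun _ => (0 : ℂ)) Filter.atTop K

/-- `B` is uniformly (bounded away from) nonzero: for no sequence of conformal automorphisms
`φ_n` of the disk do the compositions `B ∘ φ_n` tend to `0` uniformly on compacta. -/
def UniformlyNonzero (B : ℂ → ℂ) : Prop :=
  ∀ φ : ℕ → ℂ → ℂ, (∀ n, IsDiskAut (φ n)) →
    ¬ TendstoZeroOnCompacts (fun n z => B (φ n z))

/-- The Carleson square based on the arc `{e^{iθ} : θ₀ ≤ θ ≤ θ₀ + 2πℓ}` of normalized length `ℓ`. -/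
def carlesonBox (θ₀ ℓ : ℝ) : Set ℂ :=
  {z : ℂ | z ≠ 0 ∧ ‖z‖ < 1 ∧ 1 - ‖z‖ < ℓ ∧
    ∃ θ ∈ Set.Icc θ₀ (θ₀ + 2 * Real.pi * ℓ),
      (z / (‖z‖ : ℂ)) = Complex.exp (θ * Complex.I)}

/-- `μ` is a Carleson measure with constant `C`. -/
def CarlesonWith (μ : Measure ℂ) (C : ℝ) : Prop :=
  ∀ θ₀ ℓ : ℝ, 0 < ℓ → ℓ ≤ 1 → μ (carlesonBox θ₀ ℓ) ≤ ENNReal.ofReal (C * ℓ)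

/-- `μ` is a Carleson measure. -/
def IsCarlesonMeasure (μ : Measure ℂ) : Prop := ∃ C : ℝ, CarlesonWith μ C

/-- The measure `Σ_k (1 - |z_k|²) δ_{z_k}`. -/
def seqMeasure (Z : ℕ → ℂ) : Measure ℂ :=
  Measure.sum (fun k => ENNReal.ofReal (1 - ‖Z k‖ ^ 2) • Measure.dirac (Z k))

/-- The number of occurrences of `ζ` in the sequence `Z`. -/
def multIn (Z : ℕ → ℂ) (ζ : ℂ) : ℕ := Nat.card {k : ℕ // Z k = ζ}

/-- `f` vanishes at each point of `Z` to order at least its multiplicity in `Z`. -/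
def VanishesOn (f : ℂ → ℂ) (Z : ℕ → ℂ) : Prop :=
  ∀ ζ : ℂ, ∀ j : ℕ, j < multIn Z ζ → iteratedDeriv j f ζ = 0

/-- The Bergman space norm `‖f‖_{A^p} = (∫_𝔻 |f|^p dA)^{1/p}`. -/
def bergmanNorm (p : ℝ) (f : ℂ → ℂ) : ℝ :=
  (∫ z in Metric.ball (0 : ℂ) 1, ‖f z‖ ^ p) ^ (1 / p)

/-- Membership in the Bergman space `A^p`. -/
def MemBergman (p : ℝ) (f : ℂ → ℂ) : Prop :=
  AnalyticOnNhd ℂ f (Metric.ball 0 1) ∧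
    IntegrableOn (fun z => ‖f z‖ ^ p) (Metric.ball (0 : ℂ) 1)

/-- The weighted Bergman norm `‖f‖_{A^{p,α}} = (∫_𝔻 |f(z)|^p (1-|z|²)^α dA(z))^{1/p}`. -/
def bergmanNormW (p α : ℝ) (f : ℂ → ℂ) : ℝ :=
  (∫ z in Metric.ball (0 : ℂ) 1,
    ‖f z‖ ^ p * (1 - ‖z‖ ^ 2) ^ α) ^ (1 / p)

/-- Membership in the weighted Bergman space `A^{p,α}`. -/
def MemBergmanW (p α : ℝ) (f : ℂ → ℂ) : Prop :=
  AnalyticOnNhd ℂ f (Metric.ball 0 1) ∧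
    IntegrableOn (fun z => ‖f z‖ ^ p * (1 - ‖z‖ ^ 2) ^ α)
      (Metric.ball (0 : ℂ) 1)

/-- The Hardy space integral means `M_p(f,r)^p`. -/
def hardyMean (p : ℝ) (f : ℂ → ℂ) (r : ℝ) : ℝ :=
  (2 * Real.pi)⁻¹ *
    ∫ θ in (0 : ℝ)..(2 * Real.pi), ‖f (r * Complex.exp (θ * Complex.I))‖ ^ p

/-- Membership in the Hardy space `H^p`, `0 < p < ∞`. -/
def MemHardy (p : ℝ) (f : ℂ → ℂ) : Prop :=
  AnalyticOnNhd ℂ f (Metric.ball 0 1) ∧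
    ∃ M : ℝ, ∀ r : ℝ, 0 < r → r < 1 → hardyMean p f r ≤ M

/-- `‖f‖_{H^p}^p = sup_{0<r<1} M_p(f,r)^p`. -/
def hardyNormP (p : ℝ) (f : ℂ → ℂ) : ℝ :=
  sSup {x : ℝ | ∃ r : ℝ, 0 < r ∧ r < 1 ∧ x = hardyMean p f r}

/-- Membership in `H^∞`: bounded analytic functions on the disk. -/
def MemHardyInf (f : ℂ → ℂ) : Prop :=
  AnalyticOnNhd ℂ f (Metric.ball 0 1) ∧
    ∃ M : ℝ, ∀ z ∈ Metric.ball (0 : ℂ) 1, ‖f z‖ ≤ M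

lemma key_identity (a z : ℂ) :
    ‖1 - (starRingEnd ℂ) a * z‖ ^ 2 =
      ‖a - z‖ ^ 2 + (1 - ‖a‖ ^ 2) * (1 - ‖z‖ ^ 2) := by
  rw [Complex.sq_norm, Complex.sq_norm, Complex.sq_norm, Complex.sq_norm]
  simp only [Complex.normSq_apply, Complex.mul_re, Complex.mul_im, Complex.sub_re,
    Complex.sub_im, Complex.one_re, Complex.one_im, Complex.conj_re, Complex.conj_im]
  ring

lemma one_sub_ne {a z : ℂ} (ha : ‖a‖ < 1) (hz : ‖z‖ < 1) :
    1 - (starRingEnd ℂ) a * z ≠ 0 := by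
  intro h
  have h2 := key_identity a z
  rw [h] at h2
  simp at h2
  nlinarith [norm_nonneg (a - z), sq_nonneg (‖a - z‖),
    mul_pos (by nlinarith [norm_nonneg a] : (0:ℝ) < 1 - ‖a‖ ^ 2)
      (by nlinarith [norm_nonneg z] : (0:ℝ) < 1 - ‖z‖ ^ 2)]

lemma abs_sub_lt {a z : ℂ} (ha : ‖a‖ < 1) (hz : ‖z‖ < 1) :
    ‖a - z‖ < ‖1 - (starRingEnd ℂ) a * z‖ := by
  have h2 := key_identity a z
  have hd2 : ‖a - z‖ ^ 2 < ‖1 - (starRingEnd ℂ) a * z‖ ^ 2 := by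
    nlinarith [mul_pos (by nlinarith [norm_nonneg a] : (0:ℝ) < 1 - ‖a‖ ^ 2)
      (by nlinarith [norm_nonneg z] : (0:ℝ) < 1 - ‖z‖ ^ 2)]
  exact lt_of_pow_lt_pow_left₀ 2 (norm_nonneg _) hd2

lemma abs_mobius_lt {a z : ℂ} (ha : ‖a‖ < 1) (hz : ‖z‖ < 1) :
    ‖mobius a z‖ < 1 := by
  rw [mobius, norm_div]
  have h1 := abs_sub_lt ha hz
  have h0 : 0 < ‖1 - (starRingEnd ℂ) a * z‖ :=
    (norm_pos_iff.2 (one_sub_ne ha hz))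
  rw [div_lt_one h0]
  exact h1

lemma abs_blaschkeFactor (a z : ℂ) :
    ‖blaschkeFactor a z‖ = ‖mobius a z‖ := by
  rw [blaschkeFactor, mobius]
  split_ifs with h
  · simp [h]
  · rw [norm_mul, norm_div, Complex.norm_conj, Complex.norm_real, Real.norm_eq_abs, _root_.abs_of_nonneg (norm_nonneg a),
      div_self (norm_ne_zero_iff.2 h), one_mul]

lemma abs_mobius_pseudo (w z : ℂ) : ‖mobius w z‖ = pseudoDist z w := by
  rw [mobius, pseudoDist, norm_div, norm_div]
  rw [norm_sub_rev z w]

lemma mobius_invariance {ζ a w : ℂ} (hζ : ‖ζ‖ < 1) (ha : ‖a‖ < 1)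
    (hw : ‖w‖ < 1) :
    ‖mobius a (mobius ζ w)‖ = ‖mobius (mobius ζ a) w‖ := by
  have hζw := one_sub_ne hζ hw
  have hζa := one_sub_ne hζ ha
  have hu : ‖mobius ζ w‖ < 1 := abs_mobius_lt hζ hw
  have hau := one_sub_ne ha hu
  set N : ℂ := ζ - a - w + a * (starRingEnd ℂ) ζ * w with hN
  set D : ℂ := 1 - (starRingEnd ℂ) a * ζ - (starRingEnd ℂ) ζ * w + (starRingEnd ℂ) a * w with hD
  have h1 : a - mobius ζ w = -N / (1 - (starRingEnd ℂ) ζ * w) := by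
    rw [mobius, eq_div_iff hζw, hN, sub_mul, div_mul_cancel₀ _ hζw]; ring
  have h2 : 1 - (starRingEnd ℂ) a * mobius ζ w = D / (1 - (starRingEnd ℂ) ζ * w) := by
    rw [mobius, eq_div_iff hζw, hD, sub_mul, mul_assoc ((starRingEnd ℂ) a), div_mul_cancel₀ _ hζw]; ring
  have h3 : mobius ζ a - w = N / (1 - (starRingEnd ℂ) ζ * a) := by
    rw [mobius, eq_div_iff hζa, hN, sub_mul, div_mul_cancel₀ _ hζa]; ring
  have hζa' : (1 : ℂ) - ζ * (starRingEnd ℂ) a ≠ 0 := by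
    intro h
    apply hζa
    have := congrArg (starRingEnd ℂ) h
    simpa [map_sub, map_mul, Complex.conj_conj] using this
  have hconj : (starRingEnd ℂ) (mobius ζ a) =
      ((starRingEnd ℂ) ζ - (starRingEnd ℂ) a) / (1 - ζ * (starRingEnd ℂ) a) := by
    rw [mobius]
    simp [map_div₀, map_sub, map_mul, Complex.conj_conj]
  have h4 : 1 - (starRingEnd ℂ) (mobius ζ a) * w = D / (1 - ζ * (starRingEnd ℂ) a) := by
    rw [hconj, eq_div_iff hζa', hD, sub_mul, mul_right_comm _ w, div_mul_cancel₀ _ hζa']; ring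
  have hDne : D ≠ 0 := by
    intro h
    have h2' := h2
    rw [h, zero_div] at h2'
    exact hau h2'
  have L : mobius a (mobius ζ w) =
      (a - mobius ζ w) / (1 - (starRingEnd ℂ) a * mobius ζ w) := rfl
  have R : mobius (mobius ζ a) w =
      (mobius ζ a - w) / (1 - (starRingEnd ℂ) (mobius ζ a) * w) := rfl
  rw [L, h1, h2, R, h3, h4]
  rw [norm_div, norm_div, norm_div, norm_div, norm_div, norm_div, norm_neg]
  have he : ‖1 - ζ * (starRingEnd ℂ) a‖ = ‖1 - (starRingEnd ℂ) ζ * a‖ := by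
    rw [← Complex.norm_conj (1 - (starRingEnd ℂ) ζ * a)]
    congr 1
    simp [map_sub, map_mul, Complex.conj_conj]
  rw [he]
  have hcne : ‖1 - (starRingEnd ℂ) ζ * w‖ ≠ 0 := norm_ne_zero_iff.2 hζw
  have hene : ‖1 - (starRingEnd ℂ) ζ * a‖ ≠ 0 := norm_ne_zero_iff.2 hζa
  have hDne' : ‖D‖ ≠ 0 := norm_ne_zero_iff.2 hDne
  field_simp

lemma sqrt_le_of_sq {x y : ℝ} (hx : 0 ≤ x) (hy : 0 ≤ y) (h : x ^ 2 ≤ y ^ 2) : x ≤ y := by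
  nlinarith

set_option maxHeartbeats 1000000 in
lemma mobius_abs_le {b w : ℂ} {r : ℝ} (hb : ‖b‖ ≤ 1 / 2) (hw : ‖w‖ ≤ r)
    (hr : r < 1) : ‖mobius b w‖ ≤ (r + 1 / 2) / (1 + r / 2) := by
  have hr0 : 0 ≤ r := le_trans (norm_nonneg w) hw
  have hb1 : ‖b‖ < 1 := lt_of_le_of_lt hb (by norm_num)
  have hw1 : ‖w‖ < 1 := lt_of_le_of_lt hw hr
  set s := ‖b‖ with hs
  set t := ‖w‖ with ht
  set d := ‖b - w‖ with hd
  set D := ‖1 - (starRingEnd ℂ) b * w‖ with hD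
  have hid : D ^ 2 = d ^ 2 + (1 - s ^ 2) * (1 - t ^ 2) := key_identity b w
  have hs0 : 0 ≤ s := norm_nonneg b
  have ht0 : 0 ≤ t := norm_nonneg w
  have hd0 : 0 ≤ d := norm_nonneg (b - w)
  have hD0 : 0 < D := norm_pos_iff.2 (one_sub_ne hb1 hw1)
  have htri : d ≤ s + t := by
    rw [hd, hs, ht]
    show ‖b - w‖ ≤ ‖b‖ + ‖w‖
    rw [show b - w = b + -w by ring]
    exact le_trans (norm_add_le b (-w)) (by rw [norm_neg])
  -- step 1 : d * (1 + s*t) ≤ (s+t) * D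
  have hstep1 : d * (1 + s * t) ≤ (s + t) * D := by
    apply sqrt_le_of_sq (by positivity) (by positivity)
    have key : ((s + t) * D) ^ 2 - (d * (1 + s * t)) ^ 2 =
        (1 - s ^ 2) * (1 - t ^ 2) * ((s + t) ^ 2 - d ^ 2) := by
      rw [mul_pow, mul_pow, hid]; ring
    nlinarith [mul_nonneg (mul_nonneg (by nlinarith : (0:ℝ) ≤ 1 - s ^ 2)
      (by nlinarith : (0:ℝ) ≤ 1 - t ^ 2)) (by nlinarith : (0:ℝ) ≤ (s + t) ^ 2 - d ^ 2)]
  -- step 2 : (s + t) * (1 + r/2) ≤ (r + 1/2) * (1 + s*t)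
  have hstep2 : (s + t) * (1 + r / 2) ≤ (r + 1 / 2) * (1 + s * t) := by
    nlinarith [mul_nonneg (sub_nonneg.2 hb) (sub_nonneg.2 (le_of_lt (lt_of_le_of_lt hw hr))),
      mul_nonneg (sub_nonneg.2 hw) hs0, mul_nonneg (sub_nonneg.2 hb) (mul_nonneg hr0 ht0),
      mul_nonneg (sub_nonneg.2 hw) (mul_nonneg hs0 hs0)]
  have habs : ‖mobius b w‖ = d / D := by
    rw [mobius, norm_div]
  rw [habs, div_le_div_iff₀ hD0 (by linarith : (0:ℝ) < 1 + r / 2)]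
  -- goal : d * (1 + r/2) ≤ (r + 1/2) * D
  have hst : (0:ℝ) < 1 + s * t := by nlinarith
  nlinarith [mul_le_mul_of_nonneg_right hstep1 (by linarith : (0:ℝ) ≤ 1 + r / 2),
    mul_le_mul_of_nonneg_right hstep2 (le_of_lt hD0), mul_pos hst hD0]

lemma blaschke_sub_one {a z : ℂ} (ha : ‖a‖ < 1) (hz : ‖z‖ < 1) :
    ‖blaschkeFactor a z - 1‖ ≤
      (1 - ‖a‖ ^ 2) * ((1 + ‖z‖) / (1 - ‖z‖)) := by
  have hz1 : (0:ℝ) < 1 - ‖z‖ := by linarith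
  by_cases h : a = 0
  · rw [blaschkeFactor, if_pos h, h]
    simp only [norm_zero]
    have h1 : ‖z - 1‖ ≤ 1 + ‖z‖ := by
      rw [show z - 1 = z + -1 by ring]
      refine le_trans (norm_add_le z (-1)) ?_
      rw [norm_neg, norm_one, add_comm]
    have h2 : 1 + ‖z‖ ≤ (1 + ‖z‖) / (1 - ‖z‖) := by
      rw [le_div_iff₀ hz1]
      nlinarith [norm_nonneg z]
    simp only [pow_two, norm_zero]
    calc ‖z - 1‖ ≤ 1 + ‖z‖ := h1
      _ ≤ (1 + ‖z‖) / (1 - ‖z‖) := h2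
      _ = (1 - 0 * 0) * ((1 + ‖z‖) / (1 - ‖z‖)) := by ring
  · set α : ℂ := (‖a‖ : ℂ) with hα
    have hαne : α ≠ 0 := by
      simp [hα, Complex.ofReal_eq_zero, norm_eq_zero, h]
    have hne := one_sub_ne ha hz
    have hac : (starRingEnd ℂ) a * a = α ^ 2 := by
      rw [mul_comm, Complex.mul_conj, Complex.normSq_eq_norm_sq, hα]
      push_cast
      ring
    have e1 : blaschkeFactor a z - 1 =
        ((α - 1) * (α + (starRingEnd ℂ) a * z)) / (α * (1 - (starRingEnd ℂ) a * z)) := by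
      rw [blaschkeFactor, if_neg h, ← hα]
      field_simp
      linear_combination hac
    rw [e1, norm_div, norm_mul, norm_mul]
    have hαabs : ‖α‖ = ‖a‖ := by
      rw [hα, Complex.norm_real, Real.norm_eq_abs, _root_.abs_of_nonneg (norm_nonneg a)]
    have habs1 : ‖α - 1‖ = 1 - ‖a‖ := by
      rw [hα, show ((‖a‖ : ℝ) : ℂ) - 1 = ((‖a‖ - 1 : ℝ) : ℂ) by push_cast; ring,
        Complex.norm_real, Real.norm_eq_abs, abs_of_nonpos (by linarith), neg_sub]
    have habs2 : ‖α + (starRingEnd ℂ) a * z‖ ≤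
        ‖a‖ * (1 + ‖z‖) := by
      refine le_trans (norm_add_le _ _) ?_
      rw [hαabs, norm_mul, Complex.norm_conj]
      nlinarith [norm_nonneg a, norm_nonneg z]
    have habs3 : 1 - ‖z‖ ≤ ‖1 - (starRingEnd ℂ) a * z‖ := by
      have := norm_add_le (1 - (starRingEnd ℂ) a * z) ((starRingEnd ℂ) a * z)
      simp only [sub_add_cancel, norm_one] at this
      have h4 : ‖(starRingEnd ℂ) a * z‖ ≤ ‖z‖ := by
        rw [norm_mul, Complex.norm_conj]
        nlinarith [norm_nonneg z, norm_nonneg a]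
      linarith
    have ha0 : 0 < ‖a‖ := norm_pos_iff.2 h
    have hD0 : 0 < ‖1 - (starRingEnd ℂ) a * z‖ := norm_pos_iff.2 hne
    rw [habs1, hαabs, div_le_iff₀ (by positivity)]
    have hQdiv : 1 ≤ ‖1 - (starRingEnd ℂ) a * z‖ / (1 - ‖z‖) :=
      (one_le_div hz1).2 habs3
    have hre : (1 - ‖a‖ ^ 2) * ((1 + ‖z‖) / (1 - ‖z‖)) *
        (‖a‖ * ‖1 - (starRingEnd ℂ) a * z‖) =
        ((1 - ‖a‖ ^ 2) * (1 + ‖z‖) * ‖a‖) *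
          (‖1 - (starRingEnd ℂ) a * z‖ / (1 - ‖z‖)) := by
      ring
    calc (1 - ‖a‖) * ‖α + (starRingEnd ℂ) a * z‖
        ≤ (1 - ‖a‖) * (‖a‖ * (1 + ‖z‖)) :=
          mul_le_mul_of_nonneg_left habs2 (by linarith)
      _ ≤ (1 - ‖a‖ ^ 2) * (1 + ‖z‖) * ‖a‖ := by
          nlinarith [mul_nonneg (mul_nonneg (mul_self_nonneg (‖a‖))
            (by nlinarith [norm_nonneg z] : (0:ℝ) ≤ 1 + ‖z‖))
            (by linarith : (0:ℝ) ≤ 1 - ‖a‖)]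
      _ ≤ ((1 - ‖a‖ ^ 2) * (1 + ‖z‖) * ‖a‖) *
          (‖1 - (starRingEnd ℂ) a * z‖ / (1 - ‖z‖)) := by
          refine le_mul_of_one_le_right
            (mul_nonneg (mul_nonneg (by nlinarith [norm_nonneg a] : (0:ℝ) ≤ 1 - ‖a‖ ^ 2)
              (by nlinarith [norm_nonneg z] : (0:ℝ) ≤ 1 + ‖z‖))
              (norm_nonneg a)) hQdiv
      _ = (1 - ‖a‖ ^ 2) * ((1 + ‖z‖) / (1 - ‖z‖)) *
          (‖a‖ * ‖1 - (starRingEnd ℂ) a * z‖) := hre.symm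

lemma hasProd_zero_of_factor {f : ℕ → ℂ} {k0 : ℕ} (h : f k0 = 0) : HasProd f 0 := by
  rw [HasProd]
  refine Filter.Tendsto.congr' ?_ tendsto_const_nhds
  filter_upwards [Filter.eventually_ge_atTop ({k0} : Finset ℕ)] with T hT
  exact (Finset.prod_eq_zero (hT (Finset.mem_singleton_self k0)) h).symm

lemma summable_sub_one {Z : ℕ → ℂ} (hZ : IsBlaschkeSeq Z) {z : ℂ} (hz : ‖z‖ < 1) :
    Summable (fun k => ‖blaschkeFactor (Z k) z - 1‖) := by
  refine Summable.of_nonneg_of_le (fun k => norm_nonneg _)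
    (fun k => blaschke_sub_one (hZ.1 k) hz) ?_
  exact (hZ.2.mul_right _)

lemma multipliable_blaschke {Z : ℕ → ℂ} (hZ : IsBlaschkeSeq Z) {z : ℂ}
    (hz : ‖z‖ < 1) : Multipliable (fun k => blaschkeFactor (Z k) z) := by
  by_cases h0 : ∃ k, blaschkeFactor (Z k) z = 0
  · obtain ⟨k0, hk0⟩ := h0
    exact ⟨0, hasProd_zero_of_factor hk0⟩
  · push_neg at h0
    have hsum := summable_sub_one hZ hz
    have hlog : Summable (fun k => Complex.log (blaschkeFactor (Z k) z)) := by
      refine Summable.of_norm_bounded_eventually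
        (g := fun k => (3 / 2) * ‖blaschkeFactor (Z k) z - 1‖) (hsum.mul_left _) ?_
      rw [Nat.cofinite_eq_atTop]
      have htend := hsum.tendsto_atTop_zero
      filter_upwards [htend.eventually_le_const (by norm_num : (0:ℝ) < 1/2)] with k hk
      have : Complex.log (blaschkeFactor (Z k) z) =
          Complex.log (1 + (blaschkeFactor (Z k) z - 1)) := by ring_nf
      rw [this]
      have := Complex.norm_log_one_add_half_le_self
        (z := blaschkeFactor (Z k) z - 1) (by exact hk)
      simpa using this
    have hexp : HasProd (fun k => blaschkeFactor (Z k) z)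
        (Complex.exp (∑' k, Complex.log (blaschkeFactor (Z k) z))) := by
      have := hlog.hasSum.cexp
      refine this.congr_fun ?_
      intro k
      exact (Complex.exp_log (h0 k)).symm
    exact ⟨_, hexp⟩

lemma blaschkeProduct_abs_le {Z : ℕ → ℂ} (hZ : IsBlaschkeSeq Z) {z : ℂ}
    (hz : ‖z‖ < 1) (S : Finset ℕ) :
    ‖blaschkeProduct Z z‖ ≤ ∏ k ∈ S, ‖blaschkeFactor (Z k) z‖ := by
  have hm := multipliable_blaschke hZ hz
  have hp : HasProd (fun k => ‖blaschkeFactor (Z k) z‖) ‖∏' k, blaschkeFactor (Z k) z‖ :=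
    hm.hasProd.norm
  have hle1 : ∀ k, ‖blaschkeFactor (Z k) z‖ ≤ 1 := by
    intro k
    rw [abs_blaschkeFactor]
    exact le_of_lt (abs_mobius_lt (hZ.1 k) hz)
  have : ‖∏' k, blaschkeFactor (Z k) z‖ ≤ ∏ k ∈ S, ‖blaschkeFactor (Z k) z‖ := by
    refine le_of_tendsto hp ?_
    filter_upwards [Filter.eventually_ge_atTop S] with T hT
    have hsub : S ⊆ T := hT
    rw [← Finset.prod_sdiff hsub]
    have h1 : ∏ k ∈ T \ S, ‖blaschkeFactor (Z k) z‖ ≤ 1 :=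
      Finset.prod_le_one (fun k _ => norm_nonneg _) (fun k _ => by
        exact hle1 k)
    have h2 : (0:ℝ) ≤ ∏ k ∈ S, ‖blaschkeFactor (Z k) z‖ :=
      Finset.prod_nonneg (fun k _ => norm_nonneg _)
    calc (∏ k ∈ T \ S, ‖blaschkeFactor (Z k) z‖) * ∏ k ∈ S, ‖blaschkeFactor (Z k) z‖
        ≤ 1 * ∏ k ∈ S, ‖blaschkeFactor (Z k) z‖ := mul_le_mul_of_nonneg_right h1 h2
      _ = ∏ k ∈ S, ‖blaschkeFactor (Z k) z‖ := by
          rw [one_mul]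
  rw [blaschkeProduct]
  exact this

/-- If the Blaschke product of the Blaschke sequence `Z` is uniformly nonzero,
then there is a uniform bound `N` on the number of points of `Z` (counted with multiplicity,
i.e. the number of indices) lying in any pseudohyperbolic disk `D(ζ, 1/2)`, `ζ ∈ 𝔻`. -/
theorem uniformlyNonzero_implies_bounded_count
    (Z : ℕ → ℂ) (hZ : IsBlaschkeSeq Z)
    (h : UniformlyNonzero (blaschkeProduct Z)) :
    ∃ N : ℕ, ∀ ζ : ℂ, ‖ζ‖ < 1 →
      {k : ℕ | pseudoDist (Z k) ζ < 1 / 2}.encard ≤ (N : ℕ∞) := by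
  by_contra hN
  push_neg at hN
  choose ζ hζ1 hζ2 using hN
  have hcard : ∀ n : ℕ, ∃ S : Finset ℕ,
      n + 1 ≤ S.card ∧ ∀ k ∈ S, pseudoDist (Z k) (ζ n) < 1 / 2 := by
    intro n
    have hlt : ((n + 1 : ℕ) : ℕ∞) ≤ {k : ℕ | pseudoDist (Z k) (ζ n) < 1 / 2}.encard := by
      have := hζ2 n
      exact_mod_cast Order.add_one_le_of_lt this
    obtain ⟨t, htsub, htcard⟩ := Set.exists_subset_encard_eq hlt
    have htfin : t.Finite := Set.finite_of_encard_eq_coe htcard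
    refine ⟨htfin.toFinset, ?_, ?_⟩
    · rw [htfin.encard_eq_coe_toFinset_card] at htcard
      exact_mod_cast htcard.ge
    · intro k hk
      exact htsub (htfin.mem_toFinset.1 hk)
  refine h (fun n w => mobius (ζ n) w) (fun n => ⟨1, ζ n, by simp, hζ1 n, fun z => by simp⟩) ?_
  intro K hK hKc
  obtain ⟨r, hr0, hr1, hrK⟩ : ∃ r : ℝ, 0 ≤ r ∧ r < 1 ∧ ∀ w ∈ K, ‖w‖ ≤ r := by
    rcases K.eq_empty_or_nonempty with he | hne
    · exact ⟨0, le_refl 0, one_pos, by simp [he]⟩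
    · obtain ⟨x, hxK, hx⟩ := hKc.exists_isMaxOn hne continuous_norm.continuousOn
      refine ⟨‖x‖, norm_nonneg x, ?_, hx⟩
      have := hK hxK
      rwa [Metric.mem_ball, Complex.dist_eq, sub_zero] at this
  set c := (r + 1 / 2) / (1 + r / 2) with hc
  have hc0 : 0 ≤ c := by positivity
  have hc1 : c < 1 := by
    rw [hc, div_lt_one (by linarith)]
    linarith
  rw [Metric.tendstoUniformlyOn_iff]
  intro ε hε
  have htend := tendsto_pow_atTop_nhds_zero_of_lt_one hc0 hc1
  filter_upwards [htend.eventually_lt_const hε] with n hn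
  intro w hwK
  have hw1 : ‖w‖ < 1 := by
    have := hK hwK
    rwa [Metric.mem_ball, Complex.dist_eq, sub_zero] at this
  have hwr : ‖w‖ ≤ r := hrK w hwK
  rw [dist_comm, dist_zero_right]
  have hz : ‖mobius (ζ n) w‖ < 1 := abs_mobius_lt (hζ1 n) hw1
  obtain ⟨S, hScard, hSmem⟩ := hcard n
  have hbound : ‖blaschkeProduct Z (mobius (ζ n) w)‖ ≤ c ^ S.card := by
    refine le_trans (blaschkeProduct_abs_le hZ hz S) ?_
    have : ∀ k ∈ S, ‖blaschkeFactor (Z k) (mobius (ζ n) w)‖ ≤ c := by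
      intro k hk
      rw [abs_blaschkeFactor, mobius_invariance (hζ1 n) (hZ.1 k) hw1]
      refine mobius_abs_le ?_ hwr hr1
      rw [abs_mobius_pseudo]
      exact le_of_lt (hSmem k hk)
    calc ∏ k ∈ S, ‖blaschkeFactor (Z k) (mobius (ζ n) w)‖
        ≤ ∏ _k ∈ S, c := Finset.prod_le_prod (fun k _ => norm_nonneg _) this
      _ = c ^ S.card := Finset.prod_const c
  refine lt_of_le_of_lt (hbound.trans ?_) hn
  exact pow_le_pow_of_le_one hc0 (le_of_lt hc1) (by linarith)

end
end

section
/- Let A = (a_k) be a Blaschke sequence of distinct points in 𝔻 satisfying ψ(a_j,a_k) > 1/2 for all j ≠ k, and let F = B_A be its Blaschke product. If F is uniformly nonzero, then inf_k (1−|a_k|²)|F′(a_k)| > 0, and consequently A is uniformly separated. -/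
open Complex MeasureTheory Metric Filter Set List

noncomputable section

section
open Topology

namespace BlaschkeAux

lemma normSq_identity (z w : ℂ) :
    normSq (1 - (starRingEnd ℂ) w * z) - normSq (z - w) = (1 - normSq z) * (1 - normSq w) := by
  have h : (1 - (starRingEnd ℂ) w * z) * (starRingEnd ℂ) (1 - (starRingEnd ℂ) w * z)
      - (z - w) * (starRingEnd ℂ) (z - w)
      = (1 - z * (starRingEnd ℂ) z) * (1 - w * (starRingEnd ℂ) w) := by
    simp only [map_sub, map_mul, map_one, Complex.conj_conj]
    ring
  rw [Complex.mul_conj, Complex.mul_conj, Complex.mul_conj, Complex.mul_conj] at h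
  exact_mod_cast h

lemma denom_ne_zero {z w : ℂ} (hz : ‖z‖ < 1) (hw : ‖w‖ ≤ 1) :
    (1 : ℂ) - (starRingEnd ℂ) w * z ≠ 0 := by
  intro h
  have h1 : (starRingEnd ℂ) w * z = 1 := by linear_combination -h
  have h2 : ‖(starRingEnd ℂ) w * z‖ = 1 := by rw [h1]; simp
  rw [norm_mul, Complex.norm_conj] at h2
  nlinarith [norm_nonneg z, norm_nonneg w]

lemma pseudoDist_nonneg (z w : ℂ) : 0 ≤ pseudoDist z w := norm_nonneg _

lemma pseudoDist_symm (z w : ℂ) : pseudoDist z w = pseudoDist w z := by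
  unfold pseudoDist
  rw [norm_div, norm_div, ← Complex.norm_conj (1 - (starRingEnd ℂ) w * z)]
  simp only [map_sub, map_mul, map_one, Complex.conj_conj]
  rw [norm_sub_rev z w, mul_comm w ((starRingEnd ℂ) z)]

lemma pseudoDist_lt_one {z w : ℂ} (hz : ‖z‖ < 1) (hw : ‖w‖ < 1) :
    pseudoDist z w < 1 := by
  have hd : (1 : ℂ) - (starRingEnd ℂ) w * z ≠ 0 := denom_ne_zero hz hw.le
  have hd' : 0 < ‖1 - (starRingEnd ℂ) w * z‖ := norm_pos_iff.mpr hd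
  unfold pseudoDist
  rw [norm_div, div_lt_one hd']
  have h1 : normSq z < 1 := by rw [← Complex.sq_norm]; nlinarith [norm_nonneg z]
  have h2 : normSq w < 1 := by rw [← Complex.sq_norm]; nlinarith [norm_nonneg w]
  have key := normSq_identity z w
  have hlt : normSq (z - w) < normSq (1 - (starRingEnd ℂ) w * z) := by nlinarith
  rw [Complex.norm_def, Complex.norm_def]
  exact Real.sqrt_lt_sqrt (normSq_nonneg _) hlt

lemma pseudoDist_le_one {z w : ℂ} (hz : ‖z‖ < 1) (hw : ‖w‖ < 1) :
    pseudoDist z w ≤ 1 := (pseudoDist_lt_one hz hw).le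

lemma abs_blaschkeFactor (a z : ℂ) :
    ‖blaschkeFactor a z‖ = pseudoDist z a := by
  unfold blaschkeFactor pseudoDist
  split_ifs with h
  · simp [h]
  · rw [norm_mul, norm_div ((starRingEnd ℂ) a), Complex.norm_conj,
      Complex.norm_real, Real.norm_eq_abs, _root_.abs_of_nonneg (norm_nonneg a),
      div_self (norm_ne_zero_iff.mpr h), one_mul, norm_div, norm_div,
      norm_sub_rev a z]

lemma abs_mobius (w z : ℂ) : ‖mobius w z‖ = pseudoDist z w := by
  unfold mobius pseudoDist
  rw [norm_div, norm_div, norm_sub_rev w z]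

lemma abs_mobius_lt_one {w z : ℂ} (hz : ‖z‖ < 1) (hw : ‖w‖ < 1) :
    ‖mobius w z‖ < 1 := by
  rw [abs_mobius]; exact pseudoDist_lt_one hz hw

lemma pseudoDist_mobius_self {w z : ℂ} (hz : ‖z‖ < 1) (hw : ‖w‖ < 1) :
    pseudoDist (mobius w z) w = ‖z‖ := by
  have hd : (1 : ℂ) - (starRingEnd ℂ) w * z ≠ 0 := denom_ne_zero hz hw.le
  have hc : (1 : ℂ) - (starRingEnd ℂ) w * w ≠ 0 := denom_ne_zero hw hw.le
  have hd' : (1 : ℂ) - z * (starRingEnd ℂ) w ≠ 0 := by rwa [mul_comm]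
  have hc' : (1 : ℂ) - w * (starRingEnd ℂ) w ≠ 0 := by rwa [mul_comm]
  have h1 : mobius w z - w
      = -(z * (1 - (starRingEnd ℂ) w * w)) / (1 - (starRingEnd ℂ) w * z) := by
    unfold mobius
    field_simp
    ring
  have h2 : 1 - (starRingEnd ℂ) w * mobius w z
      = (1 - (starRingEnd ℂ) w * w) / (1 - (starRingEnd ℂ) w * z) := by
    unfold mobius
    field_simp
    ring
  have key : (mobius w z - w) / (1 - (starRingEnd ℂ) w * mobius w z) = -z := by
    rw [h1, h2]
    field_simp
  unfold pseudoDist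
  rw [key]
  simp

lemma pseudoDist_mobius {w x y : ℂ} (hw : ‖w‖ < 1) (hx : ‖x‖ < 1)
    (hy : ‖y‖ < 1) :
    pseudoDist (mobius w x) (mobius w y) = pseudoDist x y := by
  have hdx : (1 : ℂ) - (starRingEnd ℂ) w * x ≠ 0 := denom_ne_zero hx hw.le
  have hdy : (1 : ℂ) - (starRingEnd ℂ) w * y ≠ 0 := denom_ne_zero hy hw.le
  have hdy' : (1 : ℂ) - w * (starRingEnd ℂ) y ≠ 0 := by
    intro h
    apply hdy
    have := congrArg (starRingEnd ℂ) h
    simpa [map_sub, map_mul, Complex.conj_conj] using this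
  have hdx2 : (1 : ℂ) - x * (starRingEnd ℂ) w ≠ 0 := by rwa [mul_comm]
  have hdy2 : (1 : ℂ) - y * (starRingEnd ℂ) w ≠ 0 := by rwa [mul_comm]
  have hdy3 : (1 : ℂ) - (starRingEnd ℂ) y * w ≠ 0 := by rwa [mul_comm]
  have hA : mobius w x - mobius w y
      = (1 - (starRingEnd ℂ) w * w) * (y - x)
        / ((1 - (starRingEnd ℂ) w * x) * (1 - (starRingEnd ℂ) w * y)) := by
    unfold mobius
    field_simp
    ring
  have hB : 1 - (starRingEnd ℂ) (mobius w y) * mobius w x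
      = (1 - (starRingEnd ℂ) w * w) * (1 - (starRingEnd ℂ) y * x)
        / ((1 - w * (starRingEnd ℂ) y) * (1 - (starRingEnd ℂ) w * x)) := by
    unfold mobius
    simp only [map_div₀, map_sub, map_mul, map_one, Complex.conj_conj]
    field_simp
    ring
  have hc : (1 : ℂ) - (starRingEnd ℂ) w * w ≠ 0 := denom_ne_zero hw hw.le
  unfold pseudoDist
  rw [hA, hB]
  rw [div_div_div_eq]
  rw [norm_div, norm_div]
  have e1 : ‖1 - w * (starRingEnd ℂ) y‖ = ‖1 - (starRingEnd ℂ) w * y‖ := by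
    rw [← Complex.norm_conj (1 - w * (starRingEnd ℂ) y)]
    simp only [map_sub, map_mul, map_one, Complex.conj_conj]
  simp only [norm_mul]
  rw [e1, norm_sub_rev y x]
  have c0 : ‖1 - (starRingEnd ℂ) w * w‖ ≠ 0 := norm_ne_zero_iff.mpr hc
  have dx0 : ‖1 - (starRingEnd ℂ) w * x‖ ≠ 0 := norm_ne_zero_iff.mpr hdx
  have dy0 : ‖1 - (starRingEnd ℂ) w * y‖ ≠ 0 := norm_ne_zero_iff.mpr hdy
  have hr0c : (1 : ℂ) - (starRingEnd ℂ) y * x ≠ 0 := denom_ne_zero hx hy.le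
  have ry0 : ‖1 - (starRingEnd ℂ) y * x‖ ≠ 0 := norm_ne_zero_iff.mpr hr0c
  rw [div_eq_div_iff (mul_ne_zero (mul_ne_zero dx0 dy0) (mul_ne_zero c0 ry0)) ry0]
  ring

lemma pseudoDist_ge {p q : ℂ} (hp : ‖p‖ < 1) (hq : ‖q‖ < 1) :
    (‖p‖ - ‖q‖) / (1 - ‖p‖ * ‖q‖) ≤ pseudoDist p q := by
  set P := ‖p‖ with hP
  set Q := ‖q‖ with hQ
  have hP0 : 0 ≤ P := norm_nonneg p
  have hQ0 : 0 ≤ Q := norm_nonneg q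
  have hD : 0 < 1 - P * Q := by nlinarith
  rcases le_or_gt (P - Q) 0 with hle | hgt
  · refine le_trans ?_ (pseudoDist_nonneg p q)
    apply div_nonpos_of_nonpos_of_nonneg hle hD.le
  · have hd : (1 : ℂ) - (starRingEnd ℂ) q * p ≠ 0 := denom_ne_zero hp hq.le
    have hE : 0 < ‖1 - (starRingEnd ℂ) q * p‖ := norm_pos_iff.mpr hd
    unfold pseudoDist
    rw [norm_div, div_le_div_iff₀ hD hE]
    set E := ‖1 - (starRingEnd ℂ) q * p‖ with hEdef
    set N := ‖p - q‖ with hNdef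
    have hN0 : 0 ≤ N := norm_nonneg _
    have e2 : E ^ 2 = normSq (1 - (starRingEnd ℂ) q * p) := by
      rw [hEdef, Complex.sq_norm]
    have n2 : N ^ 2 = normSq (p - q) := by rw [hNdef, Complex.sq_norm]
    have hiden := normSq_identity p q
    have hPn : normSq p = P ^ 2 := by rw [hP, ← Complex.sq_norm]
    have hQn : normSq q = Q ^ 2 := by rw [hQ, ← Complex.sq_norm]
    have hEN : E ^ 2 - N ^ 2 = (1 - P ^ 2) * (1 - Q ^ 2) := by
      rw [hPn, hQn] at hiden
      rw [e2, n2]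
      linarith [hiden]
    have hs : (P - Q) ^ 2 ≤ N ^ 2 := by
      have := abs_norm_sub_norm_le p q
      rw [← hP, ← hQ, ← hNdef] at this
      nlinarith [abs_nonneg (P - Q), le_abs_self (P - Q), neg_abs_le (P - Q)]
    have hA' : 0 ≤ (1 - P ^ 2) * (1 - Q ^ 2) :=
      mul_nonneg (by nlinarith) (by nlinarith)
    have expand : (N * (1 - P * Q)) ^ 2 - ((P - Q) * E) ^ 2
        = ((1 - P ^ 2) * (1 - Q ^ 2)) * (N ^ 2 - (P - Q) ^ 2) := by
      linear_combination (-((P - Q) ^ 2)) * hEN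
    have key : ((P - Q) * E) ^ 2 ≤ (N * (1 - P * Q)) ^ 2 := by
      have h3 : 0 ≤ ((1 - P ^ 2) * (1 - Q ^ 2)) * (N ^ 2 - (P - Q) ^ 2) :=
        mul_nonneg hA' (by linarith)
      linarith [expand]
    have h1 : 0 ≤ (P - Q) * E := mul_nonneg hgt.le hE.le
    have h2 : 0 ≤ N * (1 - P * Q) := mul_nonneg hN0 hD.le
    have := Real.sqrt_le_sqrt key
    rwa [Real.sqrt_sq h1, Real.sqrt_sq h2] at this

lemma frac_mono {t r rb : ℝ} (ht0 : 0 ≤ t) (ht : t < 1) (hr : r < 1) (hrb0 : 0 ≤ rb)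
    (hrb : rb ≤ r) : (t - r) / (1 - t * r) ≤ (t - rb) / (1 - t * rb) := by
  have h1 : 0 < 1 - t * r := by nlinarith
  have h2 : 0 < 1 - t * rb := by nlinarith
  rw [div_le_div_iff₀ h1 h2]
  nlinarith [mul_nonneg (sub_nonneg.2 hrb) (by nlinarith : (0:ℝ) ≤ 1 - t ^ 2)]

/-! ### Part 2: multipliability infrastructure -/

lemma tprod_le_prod {ι' : Type*} {f : ι' → ℝ} (hf : Multipliable f)
    (h0 : ∀ j, 0 ≤ f j) (h1 : ∀ j, f j ≤ 1) (s : Finset ι') :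
    (∏' j, f j) ≤ ∏ j ∈ s, f j := by
  classical
  refine le_of_tendsto hf.hasProd (Filter.eventually_atTop.2 ⟨s, fun t hts => ?_⟩)
  rw [← Finset.prod_sdiff hts]
  have h2 : ∏ j ∈ t \ s, f j ≤ 1 := Finset.prod_le_one (fun j _ => h0 j) (fun j _ => h1 j)
  have h3 : 0 ≤ ∏ j ∈ s, f j := Finset.prod_nonneg fun j _ => h0 j
  exact mul_le_of_le_one_left h3 h2

lemma le_tprod {ι' : Type*} {f : ι' → ℝ} (hf : Multipliable f) {c : ℝ}
    (hc : ∀ s : Finset ι', c ≤ ∏ j ∈ s, f j) : c ≤ ∏' j, f j :=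
  ge_of_tendsto hf.hasProd (Filter.Eventually.of_forall hc)

lemma blaschkeFactor_ne_zero {α z : ℂ} (hα : ‖α‖ < 1) (hz : ‖z‖ < 1)
    (hne : z ≠ α) : blaschkeFactor α z ≠ 0 := by
  unfold blaschkeFactor
  split_ifs with h
  · subst h; simpa using hne
  · apply mul_ne_zero
    · exact div_ne_zero (fun hh => h (by simpa using hh))
        (Complex.ofReal_ne_zero.2 (norm_ne_zero_iff.mpr h))
    · exact div_ne_zero (sub_ne_zero.2 fun hh => hne hh.symm) (denom_ne_zero hz hα.le)

lemma blaschkeFactor_self (α : ℂ) : blaschkeFactor α α = 0 := by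
  unfold blaschkeFactor
  split_ifs with h
  · exact h
  · simp

lemma one_sub_blaschkeFactor_abs_le {α z : ℂ} (hα : ‖α‖ < 1)
    (hz : ‖z‖ < 1) :
    ‖1 - blaschkeFactor α z‖ ≤ 2 * (1 - ‖α‖) / (1 - ‖z‖) := by
  have hz1 : 0 < 1 - ‖z‖ := by linarith
  unfold blaschkeFactor
  split_ifs with h
  · rw [h]
    simp only [norm_zero, sub_zero]
    have h1 : ‖1 - z‖ ≤ 1 + ‖z‖ := by
      simpa using norm_sub_le (1 : ℂ) z
    rw [le_div_iff₀ hz1]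
    nlinarith [norm_nonneg z]
  · have habs0 : ‖α‖ ≠ 0 := norm_ne_zero_iff.mpr h
    have habspos : 0 < ‖α‖ := norm_pos_iff.mpr h
    have hden : (1 : ℂ) - (starRingEnd ℂ) α * z ≠ 0 := denom_ne_zero hz hα.le
    have hαC : ((‖α‖ : ℝ) : ℂ) ≠ 0 := Complex.ofReal_ne_zero.2 habs0
    have hcc : (starRingEnd ℂ) α * α = ((‖α‖ ^ 2 : ℝ) : ℂ) := by
      rw [mul_comm, Complex.mul_conj, ← Complex.sq_norm]
    have key : (1 : ℂ) - ((starRingEnd ℂ) α / (‖α‖ : ℂ))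
          * ((α - z) / (1 - (starRingEnd ℂ) α * z))
        = (((1 - ‖α‖ : ℝ) : ℂ) * ((‖α‖ : ℂ) + (starRingEnd ℂ) α * z))
          / ((‖α‖ : ℂ) * (1 - (starRingEnd ℂ) α * z)) := by
      have hcc2 : (starRingEnd ℂ) α * α = ((‖α‖ : ℝ) : ℂ) ^ 2 := by
        rw [hcc]; push_cast; ring
      rw [div_mul_div_comm, one_sub_div (mul_ne_zero hαC hden)]
      congr 1
      push_cast
      linear_combination -hcc2
    rw [key, norm_div, norm_mul, norm_mul]
    have hnum : ‖((‖α‖ : ℂ) + (starRingEnd ℂ) α * z)‖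
        ≤ ‖α‖ * (1 + ‖z‖) := by
      refine le_trans (norm_add_le _ _) ?_
      rw [norm_mul, Complex.norm_conj, Complex.norm_real, Real.norm_eq_abs, _root_.abs_of_nonneg habspos.le]
      nlinarith [norm_nonneg z, norm_nonneg α]
    have hden2 : ‖α‖ * (1 - ‖z‖)
        ≤ ‖α‖ * ‖1 - (starRingEnd ℂ) α * z‖ := by
      have h3 : 1 - ‖(starRingEnd ℂ) α * z‖
          ≤ ‖1 - (starRingEnd ℂ) α * z‖ := by
        simpa using norm_sub_norm_le (1 : ℂ) ((starRingEnd ℂ) α * z)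
      have h4 : ‖(starRingEnd ℂ) α * z‖ ≤ ‖z‖ := by
        rw [norm_mul, Complex.norm_conj]
        nlinarith [norm_nonneg z, norm_nonneg α]
      nlinarith [habspos]
    have habs1 : ‖((1 - ‖α‖ : ℝ) : ℂ)‖ = 1 - ‖α‖ := by
      rw [Complex.norm_real, Real.norm_eq_abs, _root_.abs_of_nonneg (by linarith)]
    rw [habs1, Complex.norm_real, Real.norm_eq_abs, _root_.abs_of_nonneg habspos.le]
    have hdenpos : 0 < ‖α‖ * (1 - ‖z‖) := by positivity
    calc (1 - ‖α‖) * ‖((‖α‖ : ℂ) + (starRingEnd ℂ) α * z)‖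
          / (‖α‖ * ‖1 - (starRingEnd ℂ) α * z‖)
        ≤ (1 - ‖α‖) * (‖α‖ * (1 + ‖z‖))
          / (‖α‖ * (1 - ‖z‖)) := by
          apply div_le_div₀ (mul_nonneg (by linarith) (by positivity)) ?_ hdenpos hden2
          exact mul_le_mul_of_nonneg_left hnum (by linarith)
      _ = (1 - ‖α‖) * (1 + ‖z‖) / (1 - ‖z‖) := by
          field_simp
      _ ≤ 2 * (1 - ‖α‖) / (1 - ‖z‖) := by
          apply div_le_div₀ (by nlinarith) ?_ hz1 le_rfl
          nlinarith [mul_nonneg (by linarith : (0:ℝ) ≤ 1 - ‖α‖)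
            (by linarith : (0:ℝ) ≤ 1 - ‖z‖)]

lemma summable_one_sub_abs {a : ℕ → ℂ} (hB : IsBlaschkeSeq a) :
    Summable (fun j => 1 - ‖a j‖) := by
  refine Summable.of_nonneg_of_le (fun j => by linarith [hB.1 j]) (fun j => ?_) hB.2
  nlinarith [norm_nonneg (a j), hB.1 j]

lemma log_summable_of_bounds {ι' : Type*} {g : ι' → ℂ} {u : ι' → ℝ} (hu : Summable u)
    (hall : ∀ j, ‖1 - g j‖ ≤ u j) (hev : ∀ᶠ j in Filter.cofinite, u j ≤ 1/2) :
    Summable (fun j => Complex.log (g j)) := by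
  apply Summable.of_norm_bounded_eventually (hu.mul_left (3/2))
  filter_upwards [hev] with j hj
  have h1 : ‖1 - g j‖ ≤ u j := by exact hall j
  have h2 : (1 : ℂ) + (g j - 1) = g j := by ring
  rw [← h2]
  refine le_trans (Complex.norm_log_one_add_half_le_self ?_) ?_
  · rw [norm_sub_rev]; linarith
  · rw [norm_sub_rev]; nlinarith [norm_nonneg (1 - g j)]

lemma multipliable_and_exp {ι' : Type*} {g : ι' → ℂ} (hg0 : ∀ j, g j ≠ 0)
    (hlog : Summable fun j => Complex.log (g j)) :
    Multipliable g ∧ (∏' j, g j) = Complex.exp (∑' j, Complex.log (g j)) := by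
  exact ⟨Complex.multipliable_of_summable_log hlog, (Complex.cexp_tsum_eq_tprod hg0 hlog).symm⟩

lemma cofinite_comp_inj {P : ℕ → Prop} (h : ∀ᶠ n in Filter.cofinite, P n) {ι' : Type*}
    {emb : ι' → ℕ} (he : Function.Injective emb) : ∀ᶠ j in Filter.cofinite, P (emb j) := by
  rw [Filter.eventually_cofinite] at h ⊢
  exact (h.preimage he.injOn).subset fun j hj => hj

lemma eventually_u_small {a : ℕ → ℂ} (hB : IsBlaschkeSeq a) {r : ℝ} (hr : r < 1) :
    ∀ᶠ j in Filter.cofinite, 2 * (1 - ‖a j‖) / (1 - r) ≤ 1/2 := by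
  have hs : Summable (fun j => 2 * (1 - ‖a j‖) / (1 - r)) := by
    have : (fun j => 2 * (1 - ‖a j‖) / (1 - r))
        = fun j => (2 / (1 - r)) * (1 - ‖a j‖) := funext fun j => by ring
    rw [this]
    exact (summable_one_sub_abs hB).mul_left _
  exact hs.tendsto_cofinite_zero.eventually_le_const (by norm_num)

lemma log_summable_blaschke {a : ℕ → ℂ} (hB : IsBlaschkeSeq a) {w : ℂ}
    (hw : ‖w‖ < 1) {ι' : Type*} (emb : ι' → ℕ) (hemb : Function.Injective emb) :
    Summable (fun j : ι' => Complex.log (blaschkeFactor (a (emb j)) w)) := by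
  apply log_summable_of_bounds
    (u := fun j => 2 * (1 - ‖a (emb j)‖) / (1 - ‖w‖))
  · have : (fun j : ι' => 2 * (1 - ‖a (emb j)‖) / (1 - ‖w‖))
        = fun j => (2 / (1 - ‖w‖)) * ((fun n => 1 - ‖a n‖) (emb j)) :=
      funext fun j => by ring
    rw [this]
    exact (((summable_one_sub_abs hB).comp_injective hemb).mul_left _)
  · exact fun j => one_sub_blaschkeFactor_abs_le (hB.1 _) hw
  · exact cofinite_comp_inj (eventually_u_small hB hw) hemb

lemma multipliable_blaschke_comp {a : ℕ → ℂ} (hB : IsBlaschkeSeq a) {w : ℂ}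
    (hw : ‖w‖ < 1) {ι' : Type*} (emb : ι' → ℕ) (hemb : Function.Injective emb)
    (hne : ∀ j : ι', w ≠ a (emb j)) :
    Multipliable (fun j : ι' => blaschkeFactor (a (emb j)) w) ∧
      (∏' j : ι', blaschkeFactor (a (emb j)) w)
        = Complex.exp (∑' j : ι', Complex.log (blaschkeFactor (a (emb j)) w)) :=
  multipliable_and_exp (fun j => blaschkeFactor_ne_zero (hB.1 _) hw (hne j))
    (log_summable_blaschke hB hw emb hemb)

lemma multipliable_blaschke_all {a : ℕ → ℂ} (hB : IsBlaschkeSeq a)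
    (hinj : Function.Injective a) {w : ℂ} (hw : ‖w‖ < 1) :
    Multipliable (fun j : ℕ => blaschkeFactor (a j) w) := by
  classical
  set S : Set ℕ := {j | w = a j} with hS
  have hSsub : S.Subsingleton := fun i hi j hj => hinj (hi.symm.trans hj)
  have hSfin : S.Finite := hSsub.finite
  have hfin : Finite ↥S := hSfin.to_subtype
  have h1 : Multipliable ((fun j : ℕ => blaschkeFactor (a j) w) ∘ ((↑) : ↥S → ℕ)) :=
    Multipliable.of_finite
  have h2 : Multipliable ((fun j : ℕ => blaschkeFactor (a j) w) ∘ ((↑) : ↥(Sᶜ) → ℕ)) :=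
    (multipliable_blaschke_comp hB hw (fun j : ↥(Sᶜ) => (j : ℕ)) Subtype.coe_injective
      (fun j => j.2)).1
  exact h1.mul_compl h2

lemma abs_blaschkeProduct_eq {a : ℕ → ℂ} (hB : IsBlaschkeSeq a)
    (hinj : Function.Injective a) {w : ℂ} (hw : ‖w‖ < 1) :
    ‖blaschkeProduct a w‖ = ∏' j : ℕ, pseudoDist w (a j) := by
  have hm := multipliable_blaschke_all hB hinj hw
  unfold blaschkeProduct
  rw [hm.norm_tprod]
  exact tprod_congr fun j => by
    rw [abs_blaschkeFactor]

lemma multipliable_pseudoDist_all {a : ℕ → ℂ} (hB : IsBlaschkeSeq a)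
    (hinj : Function.Injective a) {w : ℂ} (hw : ‖w‖ < 1) :
    Multipliable (fun j : ℕ => pseudoDist w (a j)) := by
  have hm := (multipliable_blaschke_all hB hinj hw).norm
  refine (multipliable_congr fun j => ?_).1 hm
  rw [abs_blaschkeFactor]

lemma abs_blaschkeProduct_le {a : ℕ → ℂ} (hB : IsBlaschkeSeq a)
    (hinj : Function.Injective a) {w : ℂ} (hw : ‖w‖ < 1) (s : Finset ℕ) :
    ‖blaschkeProduct a w‖ ≤ ∏ j ∈ s, pseudoDist w (a j) := by
  rw [abs_blaschkeProduct_eq hB hinj hw]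
  exact tprod_le_prod (multipliable_pseudoDist_all hB hinj hw)
    (fun j => pseudoDist_nonneg _ _) (fun j => (pseudoDist_lt_one hw (hB.1 j)).le) s

/-! ### Part 3: the key estimate -/

lemma log_ge_of_half {v : ℝ} (hv : 1/2 ≤ v) (hv1 : v ≤ 1) : -(2 * (1 - v)) ≤ Real.log v := by
  have hv0 : 0 < v := by linarith
  have h := Real.log_le_sub_one_of_pos (inv_pos.2 hv0)
  rw [Real.log_inv] at h
  have h2 : v⁻¹ - 1 ≤ 2 * (1 - v) := by
    have hvv : v * v⁻¹ = 1 := mul_inv_cancel₀ (ne_of_gt hv0)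
    nlinarith [mul_nonneg (by linarith : (0:ℝ) ≤ 1 - v) (by linarith : (0:ℝ) ≤ 2*v - 1)]
  linarith

lemma key_estimate {a : ℕ → ℂ} (hB : IsBlaschkeSeq a)
    (hsep : ∀ j k : ℕ, j ≠ k → 1 / 2 < pseudoDist (a j) (a k))
    {r ε : ℝ} (hr0 : 0 ≤ r) (hr1 : r < 1) (hε0 : 0 < ε)
    {N : ℕ} (hN : ((1 + r)/2) ^ N < ε)
    (k : ℕ) {w : ℂ} (hw : ‖w‖ < 1) (hwk : pseudoDist w (a k) ≤ r)
    (hprod : ∀ s' : Finset ℕ, ε ≤ ∏ j ∈ s', pseudoDist w (a j))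
    (s : Finset {j : ℕ // j ≠ k}) :
    (1/2 : ℝ) ^ N * Real.exp (2 * ((1 + r)/(1 - r)) * Real.log ε)
      ≤ ∏ j ∈ s, pseudoDist (a j.1) (a k) := by
  classical
  set s₀ : ℝ := (1 + r)/2 with hs₀
  set M : ℝ := (1 + r)/(1 - r) with hM
  have hr1' : 0 < 1 - r := by linarith
  have hM0 : 0 < M := by rw [hM]; positivity
  have hs₀0 : 0 < s₀ := by rw [hs₀]; linarith
  have hs₀1 : s₀ < 1 := by rw [hs₀, div_lt_one (by norm_num : (0:ℝ) < 2)]; linarith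
  have ht0 : ∀ j : ℕ, 0 ≤ pseudoDist w (a j) := fun j => pseudoDist_nonneg _ _
  have ht1 : ∀ j : ℕ, pseudoDist w (a j) < 1 := fun j => pseudoDist_lt_one hw (hB.1 j)
  have hv_half : ∀ j : {j : ℕ // j ≠ k}, 1/2 < pseudoDist (a j.1) (a k) :=
    fun j => hsep j.1 k j.2
  have hv_le1 : ∀ j : {j : ℕ // j ≠ k}, pseudoDist (a j.1) (a k) ≤ 1 :=
    fun j => (pseudoDist_lt_one (hB.1 _) (hB.1 _)).le
  have htri : ∀ j : {j : ℕ // j ≠ k},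
      (pseudoDist w (a j.1) - r) / (1 - pseudoDist w (a j.1) * r)
        ≤ pseudoDist (a j.1) (a k) := by
    intro j
    have h1 : pseudoDist (a j.1) (a k)
        = pseudoDist (mobius w (a j.1)) (mobius w (a k)) :=
      (pseudoDist_mobius hw (hB.1 j.1) (hB.1 k)).symm
    have hp : ‖mobius w (a j.1)‖ < 1 := abs_mobius_lt_one (hB.1 j.1) hw
    have hq : ‖mobius w (a k)‖ < 1 := abs_mobius_lt_one (hB.1 k) hw
    have h2 := pseudoDist_ge hp hq
    have hpe : ‖mobius w (a j.1)‖ = pseudoDist w (a j.1) := by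
      rw [abs_mobius, pseudoDist_symm]
    have hqe : ‖mobius w (a k)‖ = pseudoDist w (a k) := by
      rw [abs_mobius, pseudoDist_symm]
    rw [h1]
    refine le_trans ?_ h2
    rw [hpe, hqe]
    exact frac_mono (ht0 j.1) (ht1 j.1) hr1 (pseudoDist_nonneg _ _) hwk
  set t : ℕ → ℝ := fun j => pseudoDist w (a j) with htdef
  set v : {j : ℕ // j ≠ k} → ℝ := fun j => pseudoDist (a j.1) (a k) with hvdef
  set sb := s.filter (fun j => t j.1 < s₀) with hsb
  set sg := s.filter (fun j => ¬ t j.1 < s₀) with hsg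
  have hsplit : ∏ j ∈ s, v j = (∏ j ∈ sb, v j) * ∏ j ∈ sg, v j :=
    (Finset.prod_filter_mul_prod_filter_not s _ _).symm
  have hpsub : ∀ u : Finset {j : ℕ // j ≠ k}, ε ≤ ∏ j ∈ u, t j.1 := by
    intro u
    have h := hprod (u.image Subtype.val)
    rwa [Finset.prod_image (fun x _ y _ hxy => Subtype.ext hxy)] at h
  have hcard : sb.card ≤ N := by
    by_contra hc
    push_neg at hc
    have h1 : ∏ j ∈ sb, t j.1 ≤ s₀ ^ sb.card := by
      calc ∏ j ∈ sb, t j.1 ≤ ∏ _j ∈ sb, s₀ :=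
            Finset.prod_le_prod (fun j _ => ht0 j.1)
              (fun j hj => (Finset.mem_filter.1 hj).2.le)
        _ = s₀ ^ sb.card := by rw [Finset.prod_const]
    have h2 : s₀ ^ sb.card ≤ s₀ ^ N := pow_le_pow_of_le_one hs₀0.le hs₀1.le hc.le
    have h3 := hpsub sb
    linarith
  have hbad : (1/2 : ℝ) ^ N ≤ ∏ j ∈ sb, v j := by
    calc (1/2 : ℝ) ^ N ≤ (1/2) ^ sb.card :=
          pow_le_pow_of_le_one (by norm_num) (by norm_num) hcard
      _ = ∏ _j ∈ sb, (1/2 : ℝ) := by rw [Finset.prod_const]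
      _ ≤ ∏ j ∈ sb, v j :=
          Finset.prod_le_prod (fun _ _ => by norm_num) (fun j _ => (hv_half j).le)
  have hgood : Real.exp (2 * M * Real.log ε) ≤ ∏ j ∈ sg, v j := by
    have hv0 : ∀ j ∈ sg, 0 < v j := fun j _ => lt_trans (by norm_num) (hv_half j)
    have ht_pos : ∀ j ∈ sg, s₀ ≤ t j.1 := fun j hj => not_lt.1 (Finset.mem_filter.1 hj).2
    have hlogv : ∀ j ∈ sg, 2 * M * Real.log (t j.1) ≤ Real.log (v j) := by
      intro j hj
      have hts : s₀ ≤ t j.1 := ht_pos j hj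
      have htj1 : t j.1 < 1 := ht1 j.1
      have htj0 : 0 ≤ t j.1 := ht0 j.1
      have h1v : 1 - v j ≤ M * (1 - t j.1) := by
        have h2 := htri j
        have h3 : 1 - M * (1 - t j.1) ≤ (t j.1 - r) / (1 - t j.1 * r) := by
          rw [le_div_iff₀ (by nlinarith : (0:ℝ) < 1 - t j.1 * r)]
          have hMr : M * (1 - r) = 1 + r := by rw [hM]; field_simp
          nlinarith [mul_nonneg (mul_nonneg hM0.le hr0) (sq_nonneg (1 - t j.1)), hMr]
        have h4 : 1 - M * (1 - t j.1) ≤ v j := le_trans h3 h2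
        linarith
      have hlog1 : -(2 * (1 - v j)) ≤ Real.log (v j) :=
        log_ge_of_half (hv_half j).le (hv_le1 j)
      have hlog2 : Real.log (t j.1) ≤ t j.1 - 1 :=
        Real.log_le_sub_one_of_pos (lt_of_lt_of_le hs₀0 hts)
      nlinarith [hlog1, hlog2, hM0]
    have hexp : ∏ j ∈ sg, v j = Real.exp (∑ j ∈ sg, Real.log (v j)) := by
      rw [Real.exp_sum]
      exact Finset.prod_congr rfl fun j hj => (Real.exp_log (hv0 j hj)).symm
    rw [hexp]
    apply Real.exp_le_exp.2
    have hsum1 : ∑ j ∈ sg, 2 * M * Real.log (t j.1) ≤ ∑ j ∈ sg, Real.log (v j) :=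
      Finset.sum_le_sum hlogv
    have hsum2 : 2 * M * Real.log ε ≤ ∑ j ∈ sg, 2 * M * Real.log (t j.1) := by
      rw [← Finset.mul_sum]
      apply mul_le_mul_of_nonneg_left ?_ (by positivity)
      rw [← Real.log_prod (fun j hj => (lt_of_lt_of_le hs₀0 (ht_pos j hj)).ne')]
      exact Real.log_le_log hε0 (hpsub sg)
    linarith
  calc (1/2 : ℝ)^N * Real.exp (2 * M * Real.log ε)
      ≤ (∏ j ∈ sb, v j) * ∏ j ∈ sg, v j :=
        mul_le_mul hbad hgood (Real.exp_pos _).le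
          (Finset.prod_nonneg fun j _ => le_trans (by norm_num) (hv_half j).le)
    _ = ∏ j ∈ s, v j := hsplit.symm

lemma multipliable_pseudoDist_sub {a : ℕ → ℂ} (hB : IsBlaschkeSeq a)
    (hinj : Function.Injective a) (k : ℕ) :
    Multipliable (fun j : {j : ℕ // j ≠ k} => pseudoDist (a j.1) (a k)) := by
  have hne : ∀ j : {j : ℕ // j ≠ k}, a k ≠ a (j : ℕ) := by
    intro j hh
    exact j.2 (hinj hh.symm)
  have hm := (multipliable_blaschke_comp hB (hB.1 k)
    (fun j : {j : ℕ // j ≠ k} => (j : ℕ)) Subtype.coe_injective hne).1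
  refine (multipliable_congr fun j => ?_).1 hm.norm
  rw [abs_blaschkeFactor, pseudoDist_symm]

lemma Pk_lower_bound {a : ℕ → ℂ} (hB : IsBlaschkeSeq a) (hinj : Function.Injective a)
    (hsep : ∀ j k : ℕ, j ≠ k → 1 / 2 < pseudoDist (a j) (a k))
    {r ε : ℝ} (hr0 : 0 ≤ r) (hr1 : r < 1) (hε0 : 0 < ε)
    {N : ℕ} (hN : ((1 + r)/2) ^ N < ε)
    (k : ℕ) {w : ℂ} (hw : ‖w‖ < 1) (hwk : pseudoDist w (a k) ≤ r)
    (hFw : ε ≤ ‖blaschkeProduct a w‖) :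
    (1/2 : ℝ) ^ N * Real.exp (2 * ((1 + r)/(1 - r)) * Real.log ε)
      ≤ ∏' j : {j : ℕ // j ≠ k}, pseudoDist (a j.1) (a k) := by
  apply le_tprod (multipliable_pseudoDist_sub hB hinj k)
  intro s
  apply key_estimate hB hsep hr0 hr1 hε0 hN k hw hwk ?_ s
  intro s'
  exact le_trans hFw (abs_blaschkeProduct_le hB hinj hw s')

/-! ### Part 4: the derivative identity -/

lemma tprod_set_congr {A B : Set ℕ} (h : A = B) (f : ℕ → ℂ) :
    ∏' j : ↥A, f j = ∏' j : ↥B, f j := by subst h; rfl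

lemma multipliable_set_congr {A B : Set ℕ} (h : A = B) {f : ℕ → ℂ}
    (hm : Multipliable (fun j : ↥A => f j)) : Multipliable (fun j : ↥B => f j) := by
  subst h; exact hm

lemma continuousOn_blaschkeFactor {α : ℂ} {V : Set ℂ} (hV : ∀ z ∈ V, ‖z‖ < 1)
    (hα : ‖α‖ < 1) :
    ContinuousOn (fun z => blaschkeFactor α z) V := by
  unfold blaschkeFactor
  split_ifs with h
  · exact continuousOn_id
  · apply ContinuousOn.mul continuousOn_const
    apply ContinuousOn.div
    · exact continuousOn_const.sub continuousOn_id
    · exact continuousOn_const.sub (continuousOn_const.mul continuousOn_id)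
    · intro z hz
      exact denom_ne_zero (hV z hz) hα.le

lemma exists_good_ball {a : ℕ → ℂ} (hB : IsBlaschkeSeq a) (hinj : Function.Injective a)
    (k : ℕ) :
    ∃ ρ : ℝ, 0 < ρ ∧ ‖a k‖ + ρ < 1 ∧
      ∀ j : ℕ, j ≠ k → ρ < dist (a k) (a j) := by
  classical
  set β : ℝ := (1 + ‖a k‖) / 2 with hβ
  have hak := hB.1 k
  have hak0 := norm_nonneg (a k)
  have hβ1 : β < 1 := by rw [hβ]; linarith
  have hβk : ‖a k‖ < β := by rw [hβ]; linarith
  have hev : ∀ᶠ j in Filter.cofinite, 1 - ‖a j‖ < 1 - β :=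
    (summable_one_sub_abs hB).tendsto_cofinite_zero.eventually_lt_const (by linarith)
  have hDfin : {j : ℕ | ‖a j‖ ≤ β}.Finite := by
    rw [Filter.eventually_cofinite] at hev
    apply hev.subset
    intro j hj
    simp only [Set.mem_setOf_eq, not_lt] at hj ⊢
    linarith
  set F := hDfin.toFinset.erase k with hF
  set ρ₀ : ℝ := (1 - β) / 2 with hρ₀
  have hρ₀pos : 0 < ρ₀ := by rw [hρ₀]; linarith
  have hfar : ∀ j : ℕ, j ≠ k → β < ‖a j‖ → ρ₀ < dist (a k) (a j) := by
    intro j _ hjD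
    have h6 : ‖a j‖ - ‖a k‖ ≤ dist (a k) (a j) := by
      rw [dist_comm, Complex.dist_eq]
      simpa using norm_sub_norm_le (a j) (a k)
    rw [hρ₀]
    rw [hβ] at hjD
    linarith
  by_cases hFe : F.Nonempty
  · set m := F.inf' hFe (fun j => dist (a k) (a j)) with hm
    have hmpos : 0 < m := by
      rw [hm, Finset.lt_inf'_iff]
      intro j hj
      have hne : a k ≠ a j := fun hh => (Finset.mem_erase.1 hj).1 (hinj hh).symm
      exact dist_pos.2 hne
    refine ⟨min ρ₀ (m/2), by positivity, ?_, ?_⟩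
    · have h8 : min ρ₀ (m/2) ≤ ρ₀ := min_le_left _ _
      linarith
    · intro j hjk
      by_cases hjD : ‖a j‖ ≤ β
      · have hjF : j ∈ F := by
          rw [hF, Finset.mem_erase]
          exact ⟨hjk, hDfin.mem_toFinset.2 hjD⟩
        have h9 : m ≤ dist (a k) (a j) := Finset.inf'_le _ hjF
        have h5 : min ρ₀ (m/2) ≤ m/2 := min_le_right _ _
        linarith
      · push_neg at hjD
        have := hfar j hjk hjD
        have h5 : min ρ₀ (m/2) ≤ ρ₀ := min_le_left _ _
        linarith
  · refine ⟨ρ₀, hρ₀pos, by linarith, ?_⟩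
    intro j hjk
    by_cases hjD : ‖a j‖ ≤ β
    · exfalso
      apply hFe
      refine ⟨j, ?_⟩
      rw [hF, Finset.mem_erase]
      exact ⟨hjk, hDfin.mem_toFinset.2 hjD⟩
    · push_neg at hjD
      exact hfar j hjk hjD

lemma hasDerivAt_blaschkeFactor {α : ℂ} (hα : ‖α‖ < 1) :
    ∃ d : ℂ, HasDerivAt (fun z => blaschkeFactor α z) d α ∧
      ‖d‖ = (1 - ‖α‖ ^ 2)⁻¹ := by
  have h9 : (0:ℝ) < 1 - ‖α‖ ^ 2 := by nlinarith [norm_nonneg α]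
  by_cases h : α = 0
  · refine ⟨1, ?_, by rw [h]; simp⟩
    have he : (fun z => blaschkeFactor α z) = fun z => z := funext fun z => by
      unfold blaschkeFactor; rw [if_pos h]
    rw [he]
    exact hasDerivAt_id α
  · have hden : (1 : ℂ) - (starRingEnd ℂ) α * α ≠ 0 := denom_ne_zero hα hα.le
    have h1 : HasDerivAt (fun z : ℂ => α - z) (-1) α := by
      simpa using (hasDerivAt_id α).const_sub α
    have h2 : HasDerivAt (fun z : ℂ => 1 - (starRingEnd ℂ) α * z)
        (-((starRingEnd ℂ) α)) α := by
      simpa using ((hasDerivAt_id α).const_mul ((starRingEnd ℂ) α)).const_sub 1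
    have h3 := (h1.div h2 hden).const_mul ((starRingEnd ℂ) α / (‖α‖ : ℂ))
    refine ⟨(starRingEnd ℂ) α / (‖α‖ : ℂ)
      * ((-1 * (1 - (starRingEnd ℂ) α * α) - (α - α) * -((starRingEnd ℂ) α))
        / (1 - (starRingEnd ℂ) α * α) ^ 2), ?_, ?_⟩
    · have he : (fun z => blaschkeFactor α z)
          = fun z => ((starRingEnd ℂ) α / (‖α‖ : ℂ))
            * ((α - z) / (1 - (starRingEnd ℂ) α * z)) :=
        funext fun z => by unfold blaschkeFactor; rw [if_neg h]
      rw [he]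
      exact h3
    · have hcc : (1:ℂ) - (starRingEnd ℂ) α * α = ((1 - ‖α‖ ^ 2 : ℝ) : ℂ) := by
        have hc2 : (starRingEnd ℂ) α * α = ((Complex.normSq α : ℝ) : ℂ) := by
          rw [mul_comm, Complex.mul_conj]
        rw [hc2, ← Complex.sq_norm]
        push_cast
        ring
      have habs : ‖((starRingEnd ℂ) α / (‖α‖ : ℂ))‖ = 1 := by
        rw [norm_div, Complex.norm_conj, Complex.norm_real, Real.norm_eq_abs,
          _root_.abs_of_nonneg (norm_nonneg α), div_self (norm_ne_zero_iff.mpr h)]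
      have hDne : ((1 - ‖α‖ ^ 2 : ℝ) : ℂ) ≠ 0 := by
        rw [Complex.ofReal_ne_zero]
        exact h9.ne'
      have hval : (-1 * (1 - (starRingEnd ℂ) α * α) - (α - α) * -((starRingEnd ℂ) α))
            / ((1 - (starRingEnd ℂ) α * α) ^ 2)
          = -(((1 - ‖α‖ ^ 2 : ℝ) : ℂ))⁻¹ := by
        rw [hcc]
        have hnum : ((-1 : ℂ) * ((1 - ‖α‖ ^ 2 : ℝ) : ℂ)
            - (α - α) * -((starRingEnd ℂ) α)) = -(((1 - ‖α‖ ^ 2 : ℝ) : ℂ)) := by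
          ring
        rw [hnum, pow_two (((1 - ‖α‖ ^ 2 : ℝ) : ℂ)), neg_div,
          div_mul_cancel_left₀ hDne]
      rw [norm_mul, habs, one_mul, hval]
      rw [norm_neg, norm_inv, Complex.norm_real, Real.norm_eq_abs, _root_.abs_of_nonneg h9.le]

set_option maxHeartbeats 1000000 in
lemma deriv_identity {a : ℕ → ℂ} (hB : IsBlaschkeSeq a) (hinj : Function.Injective a)
    (k : ℕ) :
    (1 - ‖a k‖ ^ 2) * ‖deriv (blaschkeProduct a) (a k)‖
      = ∏' j : {j : ℕ // j ≠ k}, pseudoDist (a j.1) (a k) := by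
  classical
  obtain ⟨ρ, hρ, hρ1, hρd⟩ := exists_good_ball hB hinj k
  set rV : ℝ := ‖a k‖ + ρ with hrV
  have hrV1 : rV < 1 := hρ1
  set V : Set ℂ := Metric.closedBall (a k) ρ with hV
  have hVabs : ∀ z ∈ V, ‖z‖ ≤ rV := by
    intro z hz
    have h0 : dist z (a k) ≤ ρ := Metric.mem_closedBall.1 hz
    rw [Complex.dist_eq] at h0
    have h1 : ‖z‖ ≤ ‖a k‖ + ‖z - a k‖ := by
      calc ‖z‖ = ‖a k + (z - a k)‖ := by ring_nf
        _ ≤ ‖a k‖ + ‖z - a k‖ := norm_add_le _ _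
    rw [hrV]
    linarith
  have hVlt : ∀ z ∈ V, ‖z‖ < 1 := fun z hz => lt_of_le_of_lt (hVabs z hz) hrV1
  have hVne : ∀ z ∈ V, ∀ j : ℕ, j ≠ k → z ≠ a j := by
    intro z hz j hj heq
    have h1 := hρd j hj
    rw [hV, Metric.mem_closedBall, heq, dist_comm] at hz
    linarith
  have hkV : a k ∈ V := Metric.mem_closedBall_self hρ.le
  set u : ℕ → ℝ := fun j => 2 * (1 - ‖a j‖) / (1 - rV) with hu
  set T : Set ℕ := {j | j ≠ k ∧ u j ≤ 1/2} with hT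
  set E : Set ℕ := {j | j ≠ k ∧ ¬ u j ≤ 1/2} with hE
  have hEfin : E.Finite := by
    have hev := eventually_u_small hB hrV1
    rw [Filter.eventually_cofinite] at hev
    apply hev.subset
    intro j hj
    exact hj.2
  set EF : Finset ℕ := hEfin.toFinset with hEF
  have hmemEF : ∀ j : ℕ, j ∈ EF ↔ (j ≠ k ∧ ¬ u j ≤ 1/2) := by
    intro j
    rw [hEF, hEfin.mem_toFinset]
    rfl
  have hkEF : k ∉ EF := fun hm => ((hmemEF k).1 hm).1 rfl
  set sfin : Finset ℕ := insert k EF with hsfin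
  have hTc : ((↑sfin : Set ℕ))ᶜ = T := by
    ext j
    simp only [hsfin, Finset.coe_insert, Set.mem_compl_iff, Set.mem_insert_iff,
      Finset.mem_coe, hT, Set.mem_setOf_eq, hmemEF j]
    tauto
  have hub : ∀ j : ℕ, ∀ z ∈ V, ‖1 - blaschkeFactor (a j) z‖ ≤ u j := by
    intro j z hz
    refine le_trans (one_sub_blaschkeFactor_abs_le (hB.1 j) (hVlt z hz)) ?_
    rw [hu]
    apply div_le_div_of_nonneg_left (by nlinarith [hB.1 j]) (by linarith)
    linarith [hVabs z hz]
  set S : ℂ → ℂ := fun z => ∑' j : ↥T, Complex.log (blaschkeFactor (a j.1) z) with hS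
  have hTsum : Summable (fun j : ↥T => (3/2 : ℝ) * u j.1) := by
    apply Summable.mul_left
    have he : (fun j : ↥T => u j.1)
        = fun j : ↥T => (2/(1-rV)) * ((fun n => 1 - ‖a n‖) j.1) :=
      funext fun j => by rw [hu]; ring
    rw [he]
    exact ((summable_one_sub_abs hB).comp_injective Subtype.coe_injective).mul_left _
  have hlogbound : ∀ (j : ↥T), ∀ z ∈ V,
      ‖Complex.log (blaschkeFactor (a j.1) z)‖ ≤ (3/2 : ℝ) * u j.1 := by
    intro j z hz
    have h1 : ‖1 - blaschkeFactor (a j.1) z‖ ≤ u j.1 := by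
      exact hub j.1 z hz
    have h2 : ‖1 - blaschkeFactor (a j.1) z‖ ≤ 1/2 := le_trans h1 j.2.2
    have h3 : (1 : ℂ) + (blaschkeFactor (a j.1) z - 1) = blaschkeFactor (a j.1) z := by ring
    rw [← h3]
    refine le_trans (Complex.norm_log_one_add_half_le_self
      (by rw [norm_sub_rev]; exact h2)) ?_
    rw [norm_sub_rev]
    nlinarith [norm_nonneg (1 - blaschkeFactor (a j.1) z)]
  have hScont : ContinuousOn S V := by
    rw [hS]
    apply continuousOn_tsum ?_ hTsum ?_
    · intro j
      apply ContinuousOn.clog (continuousOn_blaschkeFactor hVlt (hB.1 j.1))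
      intro z hz
      have h1 : ‖1 - blaschkeFactor (a j.1) z‖ ≤ 1/2 :=
        le_trans (hub j.1 z hz) j.2.2
      have h2 : 1 - (blaschkeFactor (a j.1) z).re ≤ 1/2 := by
        have h3 := Complex.re_le_norm (1 - blaschkeFactor (a j.1) z)
        simp only [Complex.sub_re, Complex.one_re] at h3
        linarith
      exact Complex.mem_slitPlane_iff.2 (Or.inl (by linarith))
    · intro j z hz
      exact hlogbound j z hz
  set G : ℂ → ℂ := fun z => (∏ j ∈ EF, blaschkeFactor (a j) z) * Complex.exp (S z) with hG
  have hGcont : ContinuousOn G V := by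
    rw [hG]
    apply ContinuousOn.mul
    · apply continuousOn_finset_prod
      intro j _
      exact continuousOn_blaschkeFactor hVlt (hB.1 j)
    · exact Complex.continuous_exp.comp_continuousOn hScont
  have hmT : ∀ z ∈ V, Multipliable (fun j : ↥T => blaschkeFactor (a j.1) z) ∧
      (∏' j : ↥T, blaschkeFactor (a j.1) z) = Complex.exp (S z) := by
    intro z hz
    have h := multipliable_blaschke_comp hB (hVlt z hz) (fun j : ↥T => j.1)
      Subtype.coe_injective (fun j => hVne z hz j.1 j.2.1)
    exact ⟨h.1, h.2⟩
  have hfact : ∀ z ∈ V, blaschkeProduct a z = blaschkeFactor (a k) z * G z := by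
    intro z hz
    haveI hfin1 : Finite ↥(↑sfin : Set ℕ) := sfin.finite_toSet.to_subtype
    have hm1 : Multipliable
        ((fun j : ℕ => blaschkeFactor (a j) z) ∘ ((↑) : ↥(↑sfin : Set ℕ) → ℕ)) :=
      Multipliable.of_finite
    have hm2 : Multipliable
        ((fun j : ℕ => blaschkeFactor (a j) z) ∘ ((↑) : ↥((↑sfin : Set ℕ)ᶜ) → ℕ)) :=
      multipliable_set_congr (f := fun n => blaschkeFactor (a n) z) hTc.symm (hmT z hz).1
    unfold blaschkeProduct
    rw [← Multipliable.tprod_mul_tprod_compl (s := (↑sfin : Set ℕ)) hm1 hm2]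
    rw [Finset.tprod_subtype' sfin (fun j => blaschkeFactor (a j) z)]
    rw [tprod_set_congr hTc (fun j => blaschkeFactor (a j) z)]
    rw [(hmT z hz).2]
    rw [hsfin, Finset.prod_insert hkEF, hG]
    ring
  have hmsub := multipliable_blaschke_comp hB (hB.1 k)
    (fun j : {j : ℕ // j ≠ k} => j.1) Subtype.coe_injective
    (fun j heq => j.2 (hinj heq).symm)
  set A : Set {j : ℕ // j ≠ k} := {j | j.1 ∈ E} with hA
  have hAfin : A.Finite := hEfin.preimage Subtype.coe_injective.injOn
  haveI hAfinite : Finite ↥A := hAfin.to_subtype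
  let eT : ↥T ≃ ↥(Aᶜ) :=
    { toFun := fun j => ⟨⟨j.1, j.2.1⟩, by
        intro hmem
        have h1 : (⟨j.1, j.2.1⟩ : {j : ℕ // j ≠ k}).1 ∈ E := hmem
        exact h1.2 j.2.2⟩
      invFun := fun j => ⟨j.1.1, j.1.2, by
        by_contra hcon
        exact j.2 ⟨j.1.2, hcon⟩⟩
      left_inv := fun j => rfl
      right_inv := fun j => Subtype.ext (Subtype.ext rfl) }
  let eE : ↥E ≃ ↥A :=
    { toFun := fun j => ⟨⟨j.1, j.2.1⟩, j.2⟩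
      invFun := fun j => ⟨j.1.1, j.2⟩
      left_inv := fun j => rfl
      right_inv := fun j => Subtype.ext (Subtype.ext rfl) }
  have htail_eq : (∏' j : ↥(Aᶜ), blaschkeFactor (a j.1.1) (a k)) = Complex.exp (S (a k)) := by
    rw [← Equiv.tprod_eq eT (fun j : ↥(Aᶜ) => blaschkeFactor (a j.1.1) (a k))]
    exact (hmT (a k) hkV).2
  have hmAc : Multipliable (fun j : ↥(Aᶜ) => blaschkeFactor (a j.1.1) (a k)) :=
    eT.multipliable_iff.1 (hmT (a k) hkV).1
  have hmA : Multipliable (fun j : ↥A => blaschkeFactor (a j.1.1) (a k)) :=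
    Multipliable.of_finite
  have hAval : (∏' j : ↥A, blaschkeFactor (a j.1.1) (a k))
      = ∏ j ∈ EF, blaschkeFactor (a j) (a k) := by
    rw [← Equiv.tprod_eq eE (fun j : ↥A => blaschkeFactor (a j.1.1) (a k))]
    have e3 : E = (↑EF : Set ℕ) := hEfin.coe_toFinset.symm
    calc (∏' j : ↥E, blaschkeFactor (a j.1) (a k))
        = ∏' j : ↥(↑EF : Set ℕ), blaschkeFactor (a j.1) (a k) :=
          tprod_set_congr e3 (fun j => blaschkeFactor (a j) (a k))
      _ = ∏ j ∈ EF, blaschkeFactor (a j) (a k) :=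
          Finset.tprod_subtype' EF (fun j => blaschkeFactor (a j) (a k))
  have hGak : (∏' j : {j : ℕ // j ≠ k}, blaschkeFactor (a j.1) (a k)) = G (a k) := by
    rw [← Multipliable.tprod_mul_tprod_compl (f := fun j : {j : ℕ // j ≠ k} => blaschkeFactor (a j.1) (a k))
      (s := A) hmA hmAc, hAval, htail_eq, hG]
  have hPabs : ‖G (a k)‖
      = ∏' j : {j : ℕ // j ≠ k}, pseudoDist (a j.1) (a k) := by
    rw [← hGak, hmsub.1.norm_tprod]
    exact tprod_congr fun j => by
      rw [abs_blaschkeFactor, pseudoDist_symm]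
  obtain ⟨d, hd_has, hd_abs⟩ := hasDerivAt_blaschkeFactor (hB.1 k)
  have hF0 : blaschkeProduct a (a k) = 0 := by
    rw [hfact (a k) hkV, blaschkeFactor_self, zero_mul]
  have hVnhds : V ∈ 𝓝 (a k) := Metric.closedBall_mem_nhds _ hρ
  have hGck : ContinuousAt G (a k) := hGcont.continuousAt hVnhds
  have hFd : HasDerivAt (blaschkeProduct a) (d * G (a k)) (a k) := by
    rw [hasDerivAt_iff_tendsto_slope]
    have h1 : Filter.Tendsto (slope (fun z => blaschkeFactor (a k) z) (a k))
        (𝓝[≠] (a k)) (𝓝 d) := hasDerivAt_iff_tendsto_slope.1 hd_has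
    have h2 : Filter.Tendsto G (𝓝[≠] (a k)) (𝓝 (G (a k))) :=
      hGck.tendsto.mono_left nhdsWithin_le_nhds
    refine Filter.Tendsto.congr' ?_ (h1.mul h2)
    filter_upwards [self_mem_nhdsWithin, mem_nhdsWithin_of_mem_nhds hVnhds]
      with z hz hzV
    have hzk : z ≠ a k := hz
    rw [slope_def_field, slope_def_field, hfact z hzV, hF0, blaschkeFactor_self]
    field_simp
    ring
  rw [hFd.deriv, norm_mul, hd_abs, ← hPabs]
  have h9 : (0:ℝ) < 1 - ‖a k‖ ^ 2 := by
    nlinarith [norm_nonneg (a k), hB.1 k]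
  rw [← mul_assoc, mul_inv_cancel₀ h9.ne', one_mul]

end BlaschkeAux

end

open BlaschkeAux in
/-- Let `A = (a_k)` be a Blaschke sequence of distinct points with
`ψ(a_j, a_k) > 1/2` for `j ≠ k`, and let `F = B_A`. If `F` is uniformly nonzero, then
`inf_k (1-|a_k|²)|F'(a_k)| > 0` and consequently `A` is uniformly separated. -/
theorem separated_uniformlyNonzero_implies_unifSep
    (a : ℕ → ℂ) (hB : IsBlaschkeSeq a) (hinj : Function.Injective a)
    (hsep : ∀ j k : ℕ, j ≠ k → 1 / 2 < pseudoDist (a j) (a k))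
    (h : UniformlyNonzero (blaschkeProduct a)) :
    (∃ δ : ℝ, 0 < δ ∧ ∀ k : ℕ,
      δ ≤ (1 - ‖a k‖ ^ 2) * ‖deriv (blaschkeProduct a) (a k)‖) ∧
    UniformlySeparated a := by
  have hP : ∃ δ : ℝ, 0 < δ ∧ ∀ k : ℕ,
      δ ≤ ∏' j : {j : ℕ // j ≠ k}, pseudoDist (a j.1) (a k) := by
    by_contra hcon
    push_neg at hcon
    have hsel : ∀ n : ℕ, ∃ k : ℕ,
        (∏' j : {j : ℕ // j ≠ k}, pseudoDist (a j.1) (a k)) < 1/((n:ℝ)+1) := by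
      intro n
      obtain ⟨k, hk⟩ := hcon (1/((n:ℝ)+1)) (by positivity)
      exact ⟨k, hk⟩
    choose ks hks using hsel
    refine h (fun n z => mobius (a (ks n)) z) (fun n =>
      ⟨1, a (ks n), by simp, hB.1 _, fun z => (one_mul _).symm⟩) ?_
    intro K hK hKc
    rcases K.eq_empty_or_nonempty with hKe | hKne
    · rw [hKe]; exact tendstoUniformlyOn_empty
    obtain ⟨z₀, hz₀K, hmax⟩ := hKc.exists_isMaxOn hKne continuous_norm.continuousOn
    set r : ℝ := ‖z₀‖ with hr
    have hr0 : 0 ≤ r := norm_nonneg z₀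
    have hr1 : r < 1 := by
      have h1 := hK hz₀K
      rwa [Metric.mem_ball, Complex.dist_eq, sub_zero] at h1
    rw [Metric.tendstoUniformlyOn_iff]
    intro ε' hε'
    set ε : ℝ := min (ε'/2) (1/2) with hε
    have hε0 : 0 < ε := lt_min (by linarith) (by norm_num)
    have hεε' : ε < ε' := lt_of_le_of_lt (min_le_left _ _) (by linarith)
    have hs₀1 : (1 + r)/2 < 1 := by rw [div_lt_one (by norm_num : (0:ℝ) < 2)]; linarith
    obtain ⟨N, hN⟩ := exists_pow_lt_of_lt_one hε0 hs₀1
    set c : ℝ := (1/2 : ℝ)^N * Real.exp (2*((1+r)/(1-r))*Real.log ε) with hc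
    have hc0 : 0 < c := by rw [hc]; positivity
    obtain ⟨n₀, hn₀⟩ := exists_nat_one_div_lt hc0
    filter_upwards [Filter.eventually_ge_atTop n₀] with n hn z hzK
    rw [dist_comm, dist_zero_right]
    by_contra hge
    push_neg at hge
    have hzb : ‖z‖ < 1 := by
      have h1 := hK hzK
      rwa [Metric.mem_ball, Complex.dist_eq, sub_zero] at h1
    have hzr : ‖z‖ ≤ r := hmax hzK
    have hw : ‖mobius (a (ks n)) z‖ < 1 :=
      abs_mobius_lt_one hzb (hB.1 _)
    have hwk : pseudoDist (mobius (a (ks n)) z) (a (ks n)) ≤ r := by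
      rw [pseudoDist_mobius_self hzb (hB.1 _)]
      exact hzr
    have hεle : ε ≤ ‖blaschkeProduct a (mobius (a (ks n)) z)‖ :=
      le_trans hεε'.le hge
    have hlow := Pk_lower_bound hB hinj hsep hr0 hr1 hε0 hN (ks n) hw hwk hεle
    have h2 := hks n
    have h3 : (1:ℝ)/((n:ℝ)+1) ≤ 1/((n₀:ℝ)+1) := by
      apply one_div_le_one_div_of_le (by positivity)
      have : (n₀:ℝ) ≤ (n:ℝ) := Nat.cast_le.2 hn
      linarith
    rw [← hc] at hlow
    linarith
  obtain ⟨δ, hδ0, hδ⟩ := hP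
  refine ⟨⟨δ, hδ0, fun k => ?_⟩, ⟨δ, hδ0, hδ⟩⟩
  rw [deriv_identity hB hinj k]
  exact hδ k


end
end

section
/- Let Z be a Blaschke sequence in 𝔻 with Blaschke product B = B_Z. Suppose that for every sequence (ζ_n) of points of Z the compositions B∘φ_{ζ_n} do not converge to 0 uniformly on compact subsets of 𝔻. Then Z is a finite union of uniformly separated sequences. (Thus, to test uniform nonvanishing of B it suffices to test the Möbius maps φ_ζ with ζ ∈ Z.) -/
open Complex MeasureTheory Metric Filter Set List

noncomputable section

/-! ### Auxiliary lemmas -/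

lemma ne_aux {u v : ℂ} (hu : ‖u‖ < 1) (hv : ‖v‖ ≤ 1) :
    1 - u * v ≠ 0 := by
  intro h
  have h1 : u * v = 1 := by linear_combination -h
  have : ‖u * v‖ < 1 := by
    rw [norm_mul]
    have h0 := norm_nonneg v
    nlinarith [norm_nonneg u]
  rw [h1, norm_one] at this
  exact lt_irrefl _ this

lemma ne_aux' {z w : ℂ} (hz : ‖z‖ < 1) (hw : ‖w‖ ≤ 1) :
    1 - (starRingEnd ℂ) w * z ≠ 0 := by
  rw [mul_comm]
  exact ne_aux hz (by rwa [Complex.norm_conj])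

lemma pd_nonneg (z w : ℂ) : 0 ≤ pseudoDist z w := norm_nonneg _

lemma pd_symm (z w : ℂ) : pseudoDist z w = pseudoDist w z := by
  unfold pseudoDist
  rw [norm_div, norm_div]
  congr 1
  · exact norm_sub_rev z w
  · have e : (starRingEnd ℂ) (1 - (starRingEnd ℂ) w * z) = 1 - (starRingEnd ℂ) z * w := by
      simp [map_sub, map_mul, mul_comm]
    rw [← Complex.norm_conj (1 - (starRingEnd ℂ) w * z), e]

lemma key_normSq (z w : ℂ) :
    Complex.normSq (1 - (starRingEnd ℂ) w * z) - Complex.normSq (z - w) =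
      (1 - Complex.normSq z) * (1 - Complex.normSq w) := by
  simp [Complex.normSq_apply, Complex.sub_re, Complex.sub_im, Complex.mul_re, Complex.mul_im,
    Complex.one_re, Complex.one_im]
  ring

lemma one_sub_pd_sq {z w : ℂ} (hz : ‖z‖ < 1) (hw : ‖w‖ < 1) :
    1 - pseudoDist z w ^ 2 =
      (1 - ‖z‖ ^ 2) * (1 - ‖w‖ ^ 2) /
        ‖1 - (starRingEnd ℂ) w * z‖ ^ 2 := by
  have hd := ne_aux' hz hw.le
  have hd2 : Complex.normSq (1 - (starRingEnd ℂ) w * z) ≠ 0 := by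
    simpa [Complex.normSq_eq_norm_sq, pow_eq_zero_iff, sub_eq_zero] using hd
  unfold pseudoDist
  rw [norm_div, div_pow, Complex.sq_norm, Complex.sq_norm, Complex.sq_norm, Complex.sq_norm]
  rw [eq_div_iff hd2, sub_mul, div_mul_cancel₀ _ hd2, one_mul]
  linear_combination key_normSq z w

lemma pd_lt_one {z w : ℂ} (hz : ‖z‖ < 1) (hw : ‖w‖ < 1) :
    pseudoDist z w < 1 := by
  have h := one_sub_pd_sq hz hw
  have h1 : 0 < 1 - ‖z‖ ^ 2 := by nlinarith [norm_nonneg z]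
  have h2 : 0 < 1 - ‖w‖ ^ 2 := by nlinarith [norm_nonneg w]
  have h3 : ‖1 - (starRingEnd ℂ) w * z‖ ≠ 0 := by
    simpa [sub_eq_zero] using ne_aux' hz hw.le
  have hpos : 0 < 1 - pseudoDist z w ^ 2 := by
    rw [h]; positivity
  nlinarith [pd_nonneg z w]

lemma mobius_abs (a u : ℂ) : ‖mobius a u‖ = pseudoDist u a := by
  unfold mobius pseudoDist
  rw [norm_div, norm_div, norm_sub_rev a u]

lemma mobius_mem {a u : ℂ} (ha : ‖a‖ < 1) (hu : ‖u‖ < 1) :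
    ‖mobius a u‖ < 1 := by
  rw [mobius_abs]; exact pd_lt_one hu ha

lemma mobius_invol {a u : ℂ} (ha : ‖a‖ < 1) (hu : ‖u‖ < 1) :
    mobius a (mobius a u) = u := by
  have h1 : 1 - (starRingEnd ℂ) a * u ≠ 0 := ne_aux' hu ha.le
  have h1c : 1 - u * (starRingEnd ℂ) a ≠ 0 := by rwa [mul_comm]
  have h2 : 1 - (starRingEnd ℂ) a * mobius a u ≠ 0 :=
    ne_aux' (mobius_mem ha hu) ha.le
  have h3 : 1 - (starRingEnd ℂ) a * a ≠ 0 := ne_aux' ha ha.le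
  have e : 1 - (starRingEnd ℂ) a * mobius a u =
      (1 - (starRingEnd ℂ) a * a) / (1 - (starRingEnd ℂ) a * u) := by
    unfold mobius
    field_simp
    ring
  unfold mobius
  rw [show (a - u : ℂ) / (1 - (starRingEnd ℂ) a * u) = mobius a u from rfl, e]
  rw [div_div_eq_mul_div, div_eq_iff h3]
  unfold mobius
  field_simp
  ring

lemma pd_mobius_both {a z w : ℂ} (ha : ‖a‖ < 1) (hz : ‖z‖ < 1)
    (hw : ‖w‖ < 1) :
    pseudoDist (mobius a z) (mobius a w) = pseudoDist z w := by
  have hz1 : 1 - (starRingEnd ℂ) a * z ≠ 0 := ne_aux' hz ha.le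
  have hw1 : 1 - (starRingEnd ℂ) a * w ≠ 0 := ne_aux' hw ha.le
  have hw1' : 1 - a * (starRingEnd ℂ) w ≠ 0 :=
    ne_aux ha (by rw [Complex.norm_conj]; exact hw.le)
  have hzw : 1 - (starRingEnd ℂ) w * z ≠ 0 := ne_aux' hz hw.le
  have hz1c : 1 - z * (starRingEnd ℂ) a ≠ 0 := by rwa [mul_comm]
  have hw1c : 1 - w * (starRingEnd ℂ) a ≠ 0 := by rwa [mul_comm]
  have hw1c' : 1 - (starRingEnd ℂ) w * a ≠ 0 := by rwa [mul_comm]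
  have haa : 1 - a * (starRingEnd ℂ) a ≠ 0 :=
    ne_aux ha (by rw [Complex.norm_conj]; exact ha.le)
  have e1 : (mobius a z - mobius a w) *
      ((1 - (starRingEnd ℂ) a * z) * (1 - (starRingEnd ℂ) a * w)) =
      (a * (starRingEnd ℂ) a - 1) * (z - w) := by
    unfold mobius
    field_simp
    ring
  have e2 : (1 - (starRingEnd ℂ) (mobius a w) * mobius a z) *
      ((1 - a * (starRingEnd ℂ) w) * (1 - (starRingEnd ℂ) a * z)) =
      (1 - a * (starRingEnd ℂ) a) * (1 - (starRingEnd ℂ) w * z) := by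
    have ec : (starRingEnd ℂ) (1 - (starRingEnd ℂ) a * w) = 1 - a * (starRingEnd ℂ) w := by
      simp [map_sub, map_mul]
    unfold mobius
    rw [map_div₀, ec, map_sub]
    field_simp
    ring
  set A := ‖1 - a * (starRingEnd ℂ) a‖ with hA
  set B := ‖1 - (starRingEnd ℂ) a * z‖ with hB
  set C := ‖1 - (starRingEnd ℂ) a * w‖ with hC
  have hC' : ‖1 - a * (starRingEnd ℂ) w‖ = C := by
    rw [hC, ← Complex.norm_conj (1 - (starRingEnd ℂ) a * w)]
    congr 1
    simp [map_sub, map_mul]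
  have hA0 : A ≠ 0 := by simpa [hA, sub_eq_zero] using haa
  have hB0 : B ≠ 0 := by simpa [hB, sub_eq_zero] using hz1
  have hC0 : C ≠ 0 := by simpa [hC, sub_eq_zero] using hw1
  have hzw0 : ‖1 - (starRingEnd ℂ) w * z‖ ≠ 0 := by
    simpa [sub_eq_zero] using hzw
  have a1 : ‖mobius a z - mobius a w‖ * (B * C) = A * ‖z - w‖ := by
    have h := congrArg norm e1
    rw [norm_mul, norm_mul, norm_mul, norm_sub_rev (a * (starRingEnd ℂ) a) 1] at h
    exact h
  have a2 : ‖1 - (starRingEnd ℂ) (mobius a w) * mobius a z‖ * (C * B) =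
      A * ‖1 - (starRingEnd ℂ) w * z‖ := by
    have h := congrArg norm e2
    rw [norm_mul, norm_mul, norm_mul, hC'] at h
    exact h
  unfold pseudoDist
  rw [norm_div]
  have hBC : B * C ≠ 0 := mul_ne_zero hB0 hC0
  have n1 : ‖mobius a z - mobius a w‖ = A * ‖z - w‖ / (B * C) := by
    rw [eq_div_iff hBC]; exact a1
  have n2 : ‖1 - (starRingEnd ℂ) (mobius a w) * mobius a z‖ =
      A * ‖1 - (starRingEnd ℂ) w * z‖ / (B * C) := by
    rw [eq_div_iff hBC]; rw [mul_comm C B] at a2; exact a2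
  rw [n1, n2, norm_div]
  field_simp

lemma pd_mobius {a z w : ℂ} (ha : ‖a‖ < 1) (hz : ‖z‖ < 1)
    (hw : ‖w‖ < 1) :
    pseudoDist (mobius a z) w = pseudoDist z (mobius a w) := by
  conv_lhs => rw [← mobius_invol ha hw]
  exact pd_mobius_both ha hz (mobius_mem ha hw)

lemma factor_abs {a w : ℂ} : ‖blaschkeFactor a w‖ = pseudoDist w a := by
  unfold blaschkeFactor pseudoDist
  by_cases h : a = 0
  · simp [h]
  · rw [if_neg h, norm_mul, norm_div, norm_div, Complex.norm_conj, Complex.norm_real, Real.norm_eq_abs,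
      _root_.abs_of_nonneg (norm_nonneg a), div_self (by simpa using h), one_mul,
      norm_sub_rev a w, norm_div]

lemma factor_sub_one_bound {a w : ℂ} (ha : ‖a‖ < 1) (ha2 : 1/2 ≤ ‖a‖)
    (hw : ‖w‖ < 1) :
    ‖blaschkeFactor a w - 1‖ ≤ 4 / (1 - ‖w‖) * (1 - ‖a‖ ^ 2) := by
  have ha0 : a ≠ 0 := by
    intro h; rw [h] at ha2; simp at ha2; linarith
  have hapos : (0:ℝ) < ‖a‖ := by linarith
  have haC : (‖a‖ : ℂ) ≠ 0 := by simpa using hapos.ne'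
  have hd : 1 - (starRingEnd ℂ) a * w ≠ 0 := ne_aux' hw ha.le
  have key : blaschkeFactor a w - 1 =
      (((‖a‖ : ℂ) - 1) * ((‖a‖ : ℂ) + (starRingEnd ℂ) a * w)) /
        ((‖a‖ : ℂ) * (1 - (starRingEnd ℂ) a * w)) := by
    unfold blaschkeFactor
    rw [if_neg ha0]
    have hsq : (starRingEnd ℂ) a * a = (‖a‖ : ℂ) ^ 2 := by
      rw [mul_comm, Complex.mul_conj, Complex.normSq_eq_norm_sq]
      push_cast
      ring
    field_simp
    linear_combination hsq
  rw [key, norm_div, norm_mul, norm_mul]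
  have e1 : ‖(‖a‖ : ℂ) - 1‖ = 1 - ‖a‖ := by
    rw [show ((‖a‖ : ℂ) - 1) = ((‖a‖ - 1 : ℝ) : ℂ) by push_cast; ring,
      Complex.norm_real, Real.norm_eq_abs, abs_of_nonpos (by linarith)]
    ring
  have e2 : ‖(‖a‖ : ℂ) + (starRingEnd ℂ) a * w‖ ≤ 2 := by
    calc ‖(‖a‖ : ℂ) + (starRingEnd ℂ) a * w‖
        ≤ ‖(‖a‖ : ℂ)‖ + ‖(starRingEnd ℂ) a * w‖ :=
          norm_add_le _ _
      _ ≤ 1 + 1 := by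
          rw [Complex.norm_real, Real.norm_eq_abs, _root_.abs_of_nonneg (norm_nonneg a), norm_mul,
            Complex.norm_conj]
          have h1 : ‖a‖ * ‖w‖ ≤ 1 := by
            nlinarith [norm_nonneg w]
          gcongr
      _ = 2 := by norm_num
  have e3 : ‖(‖a‖ : ℂ)‖ = ‖a‖ := by
    rw [Complex.norm_real, Real.norm_eq_abs, _root_.abs_of_nonneg (norm_nonneg a)]
  have e4 : 1 - ‖w‖ ≤ ‖1 - (starRingEnd ℂ) a * w‖ := by
    have h5 := norm_add_le (1 - (starRingEnd ℂ) a * w) ((starRingEnd ℂ) a * w)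
    simp only [sub_add_cancel, norm_one] at h5
    rw [norm_mul, Complex.norm_conj] at h5
    nlinarith [norm_nonneg w, norm_nonneg (1 - (starRingEnd ℂ) a * w)]
  rw [e1, e3]
  set x := ‖a‖
  set t := ‖w‖
  set N := ‖(x : ℂ) + (starRingEnd ℂ) a * w‖
  set D := ‖1 - (starRingEnd ℂ) a * w‖
  have ht1 : (0:ℝ) < 1 - t := by
    have := hw; simp only [t]; linarith
  have hN0 : 0 ≤ N := norm_nonneg _
  calc (1 - x) * N / (x * D)
      ≤ (1 - x) * 2 / ((1/2) * (1 - t)) := by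
        apply div_le_div₀ (by nlinarith) (by nlinarith) (by nlinarith) (by nlinarith)
    _ = 4 * (1 - x) / (1 - t) := by
        field_simp
        ring
    _ ≤ 4 * (1 - x^2) / (1 - t) := by
        gcongr
        nlinarith
    _ = 4 / (1 - t) * (1 - x^2) := by
        field_simp

lemma multipliable_blaschke_s7 {Z : ℕ → ℂ} (h1 : ∀ k, ‖Z k‖ < 1)
    (h2 : Summable (fun k => 1 - ‖Z k‖ ^ 2)) {w : ℂ} (hw : ‖w‖ < 1) :
    Multipliable (fun k => blaschkeFactor (Z k) w) := by
  by_cases h0 : ∃ k, blaschkeFactor (Z k) w = 0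
  · obtain ⟨k0, hk0⟩ := h0
    refine ⟨0, ?_⟩
    have hev : (fun _ : Finset ℕ => (0:ℂ)) =ᶠ[Filter.atTop]
        (fun F : Finset ℕ => ∏ i ∈ F, blaschkeFactor (Z i) w) := by
      filter_upwards [Filter.eventually_ge_atTop ({k0} : Finset ℕ)] with F hF
      exact (Finset.prod_eq_zero (hF (Finset.mem_singleton_self k0)) hk0).symm
    exact tendsto_const_nhds.congr' hev
  · push_neg at h0
    have hsum1 : Summable (fun k => ‖blaschkeFactor (Z k) w - 1‖) := by
      apply Summable.of_norm_bounded_eventually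
        (g := fun k => 4 / (1 - ‖w‖) * (1 - ‖Z k‖ ^ 2)) (h2.mul_left _)
      have hev : ∀ᶠ k in Filter.cofinite, 1 - ‖Z k‖ ^ 2 < 3/4 :=
        h2.tendsto_cofinite_zero.eventually_lt_const (by norm_num)
      filter_upwards [hev] with k hk
      have hk2 : 1/2 ≤ ‖Z k‖ := by
        nlinarith [norm_nonneg (Z k)]
      rw [Real.norm_eq_abs, _root_.abs_of_nonneg (norm_nonneg _)]
      exact factor_sub_one_bound (h1 k) hk2 hw
    have hsum2 : Summable (fun k => Complex.log (blaschkeFactor (Z k) w)) := by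
      apply Summable.of_norm_bounded_eventually
        (g := fun k => (3/2) * ‖blaschkeFactor (Z k) w - 1‖) (hsum1.mul_left _)
      have hev : ∀ᶠ k in Filter.cofinite, ‖blaschkeFactor (Z k) w - 1‖ ≤ 1/2 :=
        hsum1.tendsto_cofinite_zero.eventually_le_const (by norm_num)
      filter_upwards [hev] with k hk
      have h3 := Complex.norm_log_one_add_half_le_self
        (z := blaschkeFactor (Z k) w - 1) hk
      rw [add_sub_cancel] at h3
      simpa using h3
    exact Complex.multipliable_of_summable_log hsum2

lemma tprod_le_finset_prod {g : ℕ → ℝ} (hm : Multipliable g) (h0 : ∀ i, 0 ≤ g i)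
    (h1 : ∀ i, g i ≤ 1) (F : Finset ℕ) : ∏' i, g i ≤ ∏ i ∈ F, g i := by
  refine le_of_tendsto hm.hasProd ?_
  filter_upwards [Filter.eventually_ge_atTop F] with G hG
  calc ∏ i ∈ G, g i = (∏ i ∈ G \ F, g i) * ∏ i ∈ F, g i := (Finset.prod_sdiff hG).symm
    _ ≤ 1 * ∏ i ∈ F, g i :=
        mul_le_mul_of_nonneg_right
          (Finset.prod_le_one (fun i _ => h0 i) (fun i _ => h1 i))
          (Finset.prod_nonneg fun i _ => h0 i)
    _ = _ := one_mul _

lemma le_tprod_of_forall {ι : Type*} {g : ι → ℝ} {δ : ℝ} (hδ : δ ≤ 1)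
    (h : ∀ F : Finset ι, δ ≤ ∏ i ∈ F, g i) : δ ≤ ∏' i, g i := by
  by_cases hm : Multipliable g
  · exact ge_of_tendsto hm.hasProd (Filter.Eventually.of_forall h)
  · rw [tprod_eq_one_of_not_multipliable hm]; exact hδ

lemma le_exp_aux {x : ℝ} (h0 : 0 ≤ x) (h1 : x ≤ 1) : x ≤ Real.exp (-((1 - x ^ 2) / 2)) := by
  have h2 : x ^ 2 ≤ Real.exp (x ^ 2 - 1) := by
    have := Real.add_one_le_exp (x ^ 2 - 1); linarith
  have h3 : Real.exp (-((1 - x ^ 2) / 2)) ^ 2 = Real.exp (x ^ 2 - 1) := by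
    rw [sq, ← Real.exp_add]; ring_nf
  have h4 : x ^ 2 ≤ Real.exp (-((1 - x ^ 2) / 2)) ^ 2 := by rw [h3]; exact h2
  nlinarith [Real.exp_pos (-((1 - x ^ 2) / 2))]

lemma exp_le_aux {x : ℝ} (h0 : 1/2 ≤ x) (h1 : x ≤ 1) : Real.exp (-(2 * (1 - x ^ 2))) ≤ x := by
  have e1 : Real.exp (-(2 * (1 - x ^ 2))) ≤ Real.exp (-(2 * (1 - x))) :=
    Real.exp_le_exp.mpr (by nlinarith)
  have e2 := Real.add_one_le_exp (2 * (1 - x))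
  have e4 : (0:ℝ) < Real.exp (2 * (1 - x)) := Real.exp_pos _
  have e5 : 1 ≤ x * Real.exp (2 * (1 - x)) := by nlinarith
  rw [Real.exp_neg (2 * (1 - x))] at e1
  have e6 : (Real.exp (2 * (1 - x)))⁻¹ ≤ x := by
    rw [inv_eq_one_div, div_le_iff₀ e4]; linarith
  linarith

lemma one_sub_pd_sq_ge {z m : ℂ} {r : ℝ} (hzr : ‖z‖ ≤ r) (hr : r < 1)
    (hm : ‖m‖ < 1) :
    (1 - r ^ 2) * (1 - ‖m‖ ^ 2) / 4 ≤ 1 - pseudoDist z m ^ 2 := by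
  have hz1 : ‖z‖ < 1 := lt_of_le_of_lt hzr hr
  rw [one_sub_pd_sq hz1 hm]
  have hden : ‖1 - (starRingEnd ℂ) m * z‖ ≤ 2 := by
    have h7 := norm_add_le 1 (-((starRingEnd ℂ) m * z))
    rw [norm_one, norm_neg, norm_mul, Complex.norm_conj] at h7
    have h6 : ‖m‖ * ‖z‖ ≤ 1 := by
      nlinarith [norm_nonneg m, norm_nonneg z]
    calc ‖1 - (starRingEnd ℂ) m * z‖
        = ‖1 + -((starRingEnd ℂ) m * z)‖ := by rw [sub_eq_add_neg]
      _ ≤ 1 + ‖m‖ * ‖z‖ := h7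
      _ ≤ 2 := by linarith
  have hdpos : 0 < ‖1 - (starRingEnd ℂ) m * z‖ := by
    have := ne_aux' hz1 hm.le
    have h8 : ‖1 - (starRingEnd ℂ) m * z‖ ≠ 0 := by simpa [sub_eq_zero] using this
    exact lt_of_le_of_ne (norm_nonneg _) (Ne.symm h8)
  have hzr0 : 0 ≤ r := le_trans (norm_nonneg z) hzr
  apply div_le_div₀
  · have hn1 : 0 ≤ 1 - ‖z‖ ^ 2 := by nlinarith [norm_nonneg z]
    have hn2 : 0 ≤ 1 - ‖m‖ ^ 2 := by nlinarith [norm_nonneg m]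
    positivity
  · have hn2 : 0 ≤ 1 - ‖m‖ ^ 2 := by nlinarith [norm_nonneg m]
    have : 1 - r ^ 2 ≤ 1 - ‖z‖ ^ 2 := by nlinarith [norm_nonneg z]
    nlinarith
  · positivity
  · nlinarith

/-! ### Greedy colouring -/

def pickColor (D : ℕ) (nbr : ℕ → Finset ℕ) (L : List (Fin (D + 1))) (k : ℕ) : Fin (D + 1) :=
  let img := (nbr k).image (fun j => L.getD j 0)
  if h : (Finset.univ \ img).Nonempty then (Finset.univ \ img).min' h else 0

def colorList (D : ℕ) (nbr : ℕ → Finset ℕ) : ℕ → List (Fin (D + 1))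
  | 0 => []
  | (k + 1) => colorList D nbr k ++ [pickColor D nbr (colorList D nbr k) k]

def greedy (D : ℕ) (nbr : ℕ → Finset ℕ) (k : ℕ) : Fin (D + 1) :=
  pickColor D nbr (colorList D nbr k) k

lemma colorList_length (D : ℕ) (nbr : ℕ → Finset ℕ) (k : ℕ) :
    (colorList D nbr k).length = k := by
  induction k with
  | zero => rfl
  | succ m ih => simp [colorList, ih]

lemma colorList_getD (D : ℕ) (nbr : ℕ → Finset ℕ) {j k : ℕ} (h : j < k) :
    (colorList D nbr k).getD j 0 = greedy D nbr j := by
  induction k with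
  | zero => omega
  | succ m ih =>
    rcases Nat.lt_succ_iff_lt_or_eq.mp h with h' | h'
    · rw [colorList, List.getD_append _ _ _ _ (by rw [colorList_length]; exact h')]
      exact ih h'
    · subst h'
      rw [colorList, List.getD_append_right _ _ _ _ (by rw [colorList_length])]
      rw [colorList_length, Nat.sub_self]
      rfl

lemma greedy_ne (D : ℕ) (nbr : ℕ → Finset ℕ)
    (hlt : ∀ k j, j ∈ nbr k → j < k) (hcard : ∀ k, (nbr k).card ≤ D)
    {k j : ℕ} (hj : j ∈ nbr k) : greedy D nbr j ≠ greedy D nbr k := by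
  have himg : (nbr k).image (fun j => (colorList D nbr k).getD j 0)
      = (nbr k).image (fun j => greedy D nbr j) :=
    Finset.image_congr (fun x hx => colorList_getD D nbr (hlt k x hx))
  set img := (nbr k).image (fun j => (colorList D nbr k).getD j 0) with himgdef
  have hne : (Finset.univ \ img).Nonempty := by
    rw [Finset.sdiff_nonempty]
    intro hsub
    have h1 : (Finset.univ : Finset (Fin (D+1))).card ≤ img.card := Finset.card_le_card hsub
    have h2 : img.card ≤ (nbr k).card := Finset.card_image_le
    rw [Finset.card_univ, Fintype.card_fin] at h1
    have := hcard k
    omega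
  have hmin : greedy D nbr k ∈ Finset.univ \ img := by
    rw [greedy, pickColor]
    simp only [himgdef]
    rw [dif_pos hne]
    exact Finset.min'_mem _ hne
  have hmem : greedy D nbr j ∈ img := by
    rw [himg]
    exact Finset.mem_image_of_mem _ hj
  intro hEq
  rw [Finset.mem_sdiff] at hmin
  exact hmin.2 (hEq ▸ hmem)


/-- Let `Z` be a Blaschke sequence with Blaschke product `B`. If for every
sequence `(ζ_n)` of points of `Z` the compositions `B ∘ φ_{ζ_n}` do not tend to `0` uniformly on
compact subsets of the disk, then `Z` is a finite union of uniformly separated sequences. -/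
theorem test_on_zeros_suffices
    (Z : ℕ → ℂ) (hZ : IsBlaschkeSeq Z)
    (h : ∀ s : ℕ → ℕ,
      ¬ TendstoZeroOnCompacts (fun n z => blaschkeProduct Z (mobius (Z (s n)) z))) :
    FiniteUnionUnifSep Z := by
  classical
  obtain ⟨hZ1, hZ2⟩ := hZ
  by_cases hQ : ∃ M : ℝ, ∀ (k : ℕ) (F : Finset ℕ),
      (∑ j ∈ F, (1 - pseudoDist (Z j) (Z k) ^ 2)) ≤ M
  · -- Case 1: bounded local sums; construct a colouring.
    obtain ⟨M, hM⟩ := hQ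
    set M' := max M 1 with hM'def
    have hM' : ∀ (k : ℕ) (F : Finset ℕ),
        (∑ j ∈ F, (1 - pseudoDist (Z j) (Z k) ^ 2)) ≤ M' :=
      fun k F => (hM k F).trans (le_max_left _ _)
    have hM1 : (1:ℝ) ≤ M' := le_max_right _ _
    set nbr : ℕ → Finset ℕ := fun k =>
      (Finset.range k).filter (fun j => pseudoDist (Z j) (Z k) < 1/2) with hnbrdef
    have hlt : ∀ k j, j ∈ nbr k → j < k := by
      intro k j hj
      simp only [hnbrdef, Finset.mem_filter, Finset.mem_range] at hj
      exact hj.1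
    set D := Nat.ceil (2 * M') with hDdef
    have hcard : ∀ k, (nbr k).card ≤ D := by
      intro k
      have hterm : ∀ j ∈ nbr k, (3/4 : ℝ) ≤ 1 - pseudoDist (Z j) (Z k) ^ 2 := by
        intro j hj
        simp only [hnbrdef, Finset.mem_filter, Finset.mem_range] at hj
        nlinarith [pd_nonneg (Z j) (Z k), hj.2]
      have hsum := Finset.card_nsmul_le_sum (nbr k) _ (3/4 : ℝ) hterm
      rw [nsmul_eq_mul] at hsum
      have h2 := hM' k (nbr k)
      have h3 : ((nbr k).card : ℝ) ≤ 2 * M' := by nlinarith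
      have h4 : ((nbr k).card : ℝ) ≤ (D : ℝ) := h3.trans (Nat.le_ceil _)
      exact_mod_cast h4
    set c : ℕ → Fin (D + 1) := greedy D nbr with hcdef
    have hsep : ∀ j k : ℕ, j ≠ k → c j = c k → (1/2 : ℝ) ≤ pseudoDist (Z j) (Z k) := by
      intro j k hne hc
      by_contra hlt2
      push_neg at hlt2
      rcases lt_or_gt_of_ne hne with h' | h'
      · exact greedy_ne D nbr hlt hcard
          (by simp only [hnbrdef, Finset.mem_filter, Finset.mem_range]; exact ⟨h', hlt2⟩) hc
      · refine greedy_ne D nbr hlt hcard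
          (k := j) (j := k) ?_ hc.symm
        simp only [hnbrdef, Finset.mem_filter, Finset.mem_range]
        exact ⟨h', by rwa [pd_symm]⟩
    refine ⟨D + 1, c, fun i => ⟨Real.exp (-(2 * M')), Real.exp_pos _, fun k0 => ?_⟩⟩
    apply le_tprod_of_forall
    · calc Real.exp (-(2 * M')) ≤ Real.exp 0 := Real.exp_le_exp.mpr (by linarith)
        _ = 1 := Real.exp_zero
    · intro F
      have hhalf : ∀ j : {j : {k : ℕ // c k = i} // j ≠ k0},
          (1/2 : ℝ) ≤ pseudoDist (Z j.1.1) (Z k0.1) := by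
        intro j
        apply hsep
        · intro hEq
          exact j.2 (Subtype.ext hEq)
        · rw [j.1.2, k0.2]
      have hone : ∀ j : {j : {k : ℕ // c k = i} // j ≠ k0},
          pseudoDist (Z j.1.1) (Z k0.1) ≤ 1 :=
        fun j => (pd_lt_one (hZ1 _) (hZ1 _)).le
      have hsum : (∑ j ∈ F, (1 - pseudoDist (Z j.1.1) (Z k0.1) ^ 2)) ≤ M' := by
        have hinj : ∀ x ∈ F, ∀ y ∈ F, x.1.1 = y.1.1 → x = y := by
          intro x _ y _ hxy
          exact Subtype.ext (Subtype.ext hxy)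
        have himage : ∑ x ∈ F.image (fun j : {j : {k : ℕ // c k = i} // j ≠ k0} => (j.1.1 : ℕ)),
            (1 - pseudoDist (Z x) (Z k0.1) ^ 2)
            = ∑ j ∈ F, (1 - pseudoDist (Z j.1.1) (Z k0.1) ^ 2) := Finset.sum_image hinj
        rw [← himage]
        exact hM' k0.1 _
      calc Real.exp (-(2 * M'))
          ≤ Real.exp (-(2 * ∑ j ∈ F, (1 - pseudoDist (Z j.1.1) (Z k0.1) ^ 2))) := by
            apply Real.exp_le_exp.mpr
            nlinarith
        _ = ∏ j ∈ F, Real.exp (-(2 * (1 - pseudoDist (Z j.1.1) (Z k0.1) ^ 2))) := by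
            rw [← Real.exp_sum]
            congr 1
            rw [Finset.mul_sum]
            rw [← Finset.sum_neg_distrib]
        _ ≤ ∏ j ∈ F, pseudoDist (Z j.1.1) (Z k0.1) := by
            apply Finset.prod_le_prod
            · intro j _; positivity
            · intro j _; exact exp_le_aux (hhalf j) (hone j)
  · -- Case 2: unbounded local sums; contradict the hypothesis `h`.
    exfalso
    push_neg at hQ
    choose kk FF hkF using hQ
    set s : ℕ → ℕ := fun n => kk (n : ℝ) with hsdef
    apply h s
    intro K hK hKc
    obtain ⟨r, hr0, hr1, hrK⟩ : ∃ r : ℝ, 0 ≤ r ∧ r < 1 ∧ ∀ z ∈ K, ‖z‖ ≤ r := by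
      rcases K.eq_empty_or_nonempty with hKe | hKne
      · exact ⟨0, le_refl 0, by norm_num, by simp [hKe]⟩
      · obtain ⟨z0, hz0K, hz0⟩ := hKc.exists_isMaxOn hKne continuous_norm.continuousOn
        refine ⟨‖z0‖, norm_nonneg _, ?_, fun z hz => hz0 hz⟩
        have := hK hz0K
        rwa [Metric.mem_ball, dist_zero_right] at this
    rw [Metric.tendstoUniformlyOn_iff]
    intro ε hε
    have hr2 : (0:ℝ) < 1 - r ^ 2 := by nlinarith
    set cst : ℝ := (1 - r ^ 2) / 8 with hcstdef
    have hcst0 : 0 < cst := by positivity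
    obtain ⟨N, hN⟩ : ∃ N : ℕ, Real.exp (-(cst * N)) < ε := by
      obtain ⟨N, hN⟩ := exists_nat_gt ((1 / ε) / cst)
      refine ⟨N, ?_⟩
      rw [div_lt_iff₀ hcst0] at hN
      have h2 := Real.add_one_le_exp (cst * N)
      have h3 : (0:ℝ) < Real.exp (cst * N) := Real.exp_pos _
      have hcN : (0:ℝ) ≤ cst * N := by positivity
      have h4 : 1 / ε < Real.exp (cst * N) := by nlinarith
      rw [Real.exp_neg]
      have h5 : 1 < ε * Real.exp (cst * N) := by
        have h6 := mul_lt_mul_of_pos_left h4 hε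
        rwa [mul_one_div, div_self hε.ne'] at h6
      have h7 := mul_inv_cancel₀ h3.ne'
      nlinarith [inv_pos.mpr h3]
    filter_upwards [Filter.eventually_ge_atTop N] with n hn
    intro z hzK
    have hz1 : ‖z‖ < 1 := lt_of_le_of_lt (hrK z hzK) hr1
    have hζ : ‖Z (s n)‖ < 1 := hZ1 _
    have hw1 : ‖mobius (Z (s n)) z‖ < 1 := mobius_mem hζ hz1
    rw [dist_zero_left]
    have hmul := multipliable_blaschke_s7 hZ1 hZ2 hw1
    have habs : ‖blaschkeProduct Z (mobius (Z (s n)) z)‖ =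
        ∏' k, ‖blaschkeFactor (Z k) (mobius (Z (s n)) z)‖ :=
      hmul.norm_tprod
    have hf0 : ∀ j, 0 ≤ ‖blaschkeFactor (Z j) (mobius (Z (s n)) z)‖ :=
      fun j => norm_nonneg _
    have hf1 : ∀ j, ‖blaschkeFactor (Z j) (mobius (Z (s n)) z)‖ ≤ 1 := by
      intro j
      rw [factor_abs]
      exact (pd_lt_one hw1 (hZ1 j)).le
    have hb1 : ‖blaschkeProduct Z (mobius (Z (s n)) z)‖ ≤
        ∏ j ∈ FF (n : ℝ), ‖blaschkeFactor (Z j) (mobius (Z (s n)) z)‖ := by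
      rw [habs]
      exact tprod_le_finset_prod (hmul.norm) hf0 hf1 _
    have hfac : ∀ j, ‖blaschkeFactor (Z j) (mobius (Z (s n)) z)‖ =
        pseudoDist z (mobius (Z (s n)) (Z j)) := by
      intro j
      rw [factor_abs]
      exact pd_mobius hζ hz1 (hZ1 j)
    have hstep : ∀ j, ‖blaschkeFactor (Z j) (mobius (Z (s n)) z)‖ ≤
        Real.exp (-(cst * (1 - pseudoDist (Z j) (Z (s n)) ^ 2))) := by
      intro j
      rw [hfac j]
      have hmj : ‖mobius (Z (s n)) (Z j)‖ < 1 := mobius_mem hζ (hZ1 j)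
      have hx0 : 0 ≤ pseudoDist z (mobius (Z (s n)) (Z j)) := pd_nonneg _ _
      have hx1 : pseudoDist z (mobius (Z (s n)) (Z j)) ≤ 1 := (pd_lt_one hz1 hmj).le
      have hkey := one_sub_pd_sq_ge (hrK z hzK) hr1 hmj
      have habs2 : ‖mobius (Z (s n)) (Z j)‖ = pseudoDist (Z j) (Z (s n)) :=
        mobius_abs _ _
      rw [habs2] at hkey
      calc pseudoDist z (mobius (Z (s n)) (Z j))
          ≤ Real.exp (-((1 - pseudoDist z (mobius (Z (s n)) (Z j)) ^ 2) / 2)) :=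
            le_exp_aux hx0 hx1
        _ ≤ Real.exp (-(cst * (1 - pseudoDist (Z j) (Z (s n)) ^ 2))) := by
            apply Real.exp_le_exp.mpr
            rw [hcstdef]
            nlinarith
    have hprod : ∏ j ∈ FF (n : ℝ), ‖blaschkeFactor (Z j) (mobius (Z (s n)) z)‖ ≤
        Real.exp (-(cst * ∑ j ∈ FF (n : ℝ), (1 - pseudoDist (Z j) (Z (s n)) ^ 2))) := by
      calc ∏ j ∈ FF (n : ℝ), ‖blaschkeFactor (Z j) (mobius (Z (s n)) z)‖
          ≤ ∏ j ∈ FF (n : ℝ), Real.exp (-(cst * (1 - pseudoDist (Z j) (Z (s n)) ^ 2))) :=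
            Finset.prod_le_prod (fun j _ => hf0 j) (fun j _ => hstep j)
        _ = Real.exp (-(cst * ∑ j ∈ FF (n : ℝ), (1 - pseudoDist (Z j) (Z (s n)) ^ 2))) := by
            rw [← Real.exp_sum]
            congr 1
            rw [Finset.mul_sum]
            rw [← Finset.sum_neg_distrib]
    have hbig : (n : ℝ) < ∑ j ∈ FF (n : ℝ), (1 - pseudoDist (Z j) (Z (s n)) ^ 2) := hkF (n : ℝ)
    calc ‖blaschkeProduct Z (mobius (Z (s n)) z)‖
        ≤ Real.exp (-(cst * ∑ j ∈ FF (n : ℝ), (1 - pseudoDist (Z j) (Z (s n)) ^ 2))) :=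
          hb1.trans hprod
      _ ≤ Real.exp (-(cst * n)) := by
          apply Real.exp_le_exp.mpr
          nlinarith
      _ ≤ Real.exp (-(cst * N)) := by
          apply Real.exp_le_exp.mpr
          have : (N : ℝ) ≤ (n : ℝ) := by exact_mod_cast hn
          nlinarith
      _ < ε := hN


end
end

section
/- Let Z be a sequence of distinct points in 𝔻 and N a positive integer such that every closed pseudohyperbolic disk of radius 1/2 contains at most N points of Z. Then Z can be partitioned into N subsequences Z_1, …, Z_N such that ψ(a,b) > 1/2 for every pair of distinct points a, b belonging to the same subsequence Z_j. -/
open Complex MeasureTheory Metric Filter Set List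

noncomputable section

/-- If every closed pseudohyperbolic disk of radius `1/2` centered in the unit
disk contains at most `N` points of the sequence `Z` of distinct points, then `Z` can be
partitioned into `N` subsequences, each of which is `1/2`-separated in the pseudohyperbolic
metric. -/
theorem partition_into_separated_subsequences
    (Z : ℕ → ℂ) (hZ : ∀ k, ‖Z k‖ < 1) (hinj : Function.Injective Z)
    (N : ℕ) (hN : 0 < N)
    (hcount : ∀ ζ : ℂ, ‖ζ‖ < 1 →
      {k : ℕ | pseudoDist (Z k) ζ ≤ 1 / 2}.encard ≤ (N : ℕ∞)) :
    ∃ c : ℕ → Fin N, ∀ j k : ℕ, j ≠ k → c j = c k → 1 / 2 < pseudoDist (Z j) (Z k) := by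
  classical
  have hsymm : ∀ z w : ℂ, pseudoDist z w = pseudoDist w z := by
    intro z w
    unfold pseudoDist
    rw [norm_div, norm_div, ← neg_sub w z, norm_neg,
      ← Complex.norm_conj (1 - (starRingEnd ℂ) z * w)]
    congr 2
    simp only [map_sub, map_one, map_mul, Complex.conj_conj]
    ring
  have key : ∀ (k : ℕ) (ih : (j : ℕ) → j < k → Fin N),
      ∃ i : Fin N, ∀ j (hj : j < k), pseudoDist (Z j) (Z k) ≤ 1 / 2 → ih j hj ≠ i := by
    intro k ih
    set T : Finset ℕ := (Finset.range k).filter (fun j => pseudoDist (Z j) (Z k) ≤ 1 / 2)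
      with hT
    have hknotT : k ∉ T := by
      intro hk
      exact absurd (Finset.mem_range.mp (Finset.mem_filter.mp hk).1) (lt_irrefl k)
    have hsub : ((insert k T : Finset ℕ) : Set ℕ) ⊆
        {j : ℕ | pseudoDist (Z j) (Z k) ≤ 1 / 2} := by
      intro j hj
      simp only [Finset.coe_insert, Set.mem_insert_iff, Finset.mem_coe] at hj
      rcases hj with rfl | hj
      · show pseudoDist (Z j) (Z j) ≤ 1 / 2
        norm_num [pseudoDist]
      · exact (Finset.mem_filter.mp hj).2
    have hcard : ((insert k T : Finset ℕ).card : ℕ∞) ≤ (N : ℕ∞) := by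
      calc ((insert k T : Finset ℕ).card : ℕ∞)
          = ((insert k T : Finset ℕ) : Set ℕ).encard := by
            rw [Set.encard_coe_eq_coe_finsetCard]
        _ ≤ _ := le_trans (Set.encard_mono hsub) (hcount (Z k) (hZ k))
    have hcard' : (insert k T : Finset ℕ).card ≤ N := by exact_mod_cast hcard
    have hTcard : T.card < N := by
      rw [Finset.card_insert_of_notMem hknotT] at hcard'
      omega
    set S : Finset (Fin N) := T.attach.image
      (fun j => ih j.1 (Finset.mem_range.mp (Finset.mem_filter.mp j.2).1)) with hS
    have hScard : S.card < N := lt_of_le_of_lt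
      (le_trans (Finset.card_image_le) (le_of_eq (Finset.card_attach))) hTcard
    have : ∃ i : Fin N, i ∉ S := by
      by_contra h
      push_neg at h
      have : S = Finset.univ := Finset.eq_univ_iff_forall.mpr h
      rw [this, Finset.card_univ, Fintype.card_fin] at hScard
      exact lt_irrefl _ hScard
    obtain ⟨i, hi⟩ := this
    refine ⟨i, fun j hj hnear hiEq => hi ?_⟩
    rw [hS]
    have hjT : j ∈ T := Finset.mem_filter.mpr ⟨Finset.mem_range.mpr hj, hnear⟩
    refine Finset.mem_image.mpr ⟨⟨j, hjT⟩, Finset.mem_attach _ _, ?_⟩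
    exact hiEq
  let F : (k : ℕ) → ((j : ℕ) → j < k → Fin N) → Fin N := fun k ih => (key k ih).choose
  have hF : ∀ (k : ℕ) (ih : (j : ℕ) → j < k → Fin N),
      ∀ j (hj : j < k), pseudoDist (Z j) (Z k) ≤ 1 / 2 → ih j hj ≠ F k ih :=
    fun k ih => (key k ih).choose_spec
  let c : ℕ → Fin N := WellFounded.fix (Nat.lt_wfRel.wf) F
  have hc : ∀ k, c k = F k (fun j _ => c j) := fun k =>
    WellFounded.fix_eq (Nat.lt_wfRel.wf) F k
  refine ⟨c, fun j k hjk hcjk => ?_⟩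
  by_contra hnear
  push_neg at hnear
  rcases lt_or_gt_of_ne hjk with h | h
  · have := hF k (fun j _ => c j) j h hnear
    rw [← hc k] at this
    exact this hcjk
  · have hnear' : pseudoDist (Z k) (Z j) ≤ 1 / 2 := by rw [hsymm]; exact hnear
    have := hF j (fun j _ => c j) k h hnear'
    rw [← hc j] at this
    exact this hcjk.symm

end
end
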